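/- arXiv:1709.06156 — 9 statements merged into one kernel-verified Lean document; each statement's English description precedes it below -/
import Mathlib

section
/- Let $r_1(t) = c_1/(t+1)^{\delta_1}$ and $r_2(t) = c_2/(t+1)^{\delta_2}$ with $c_1, c_2 > 0$ and $0 < \delta_2 < \delta_1 < 1$. Then for any fixed nonnegative integer $j$, the sum $\sum_{k=j}^{t-1} \left(\prod_{l=k+1}^{t-1} (1 - r_2(l))\right) r_1(k)$ tends to $0$ as $t \to \infty$. -/
open Filter Finset

-- telescoping identity
lemma tele_aux (f : ℕ → ℝ) (a b : ℕ) :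
    ∑ k ∈ Finset.Ico a b, (∏ l ∈ Finset.Ico (k+1) b, f l) * (1 - f k)
      = 1 - ∏ l ∈ Finset.Ico a b, f l := by
  rcases le_or_gt b a with h | h
  · rw [Finset.Ico_eq_empty (not_lt.mpr h)]
    simp
  · rw [Finset.sum_Ico_eq_sum_range]
    have key : ∀ i ∈ Finset.range (b - a),
        (∏ l ∈ Finset.Ico (a + i + 1) b, f l) * (1 - f (a + i))
          = (∏ l ∈ Finset.Ico (a + (i + 1)) b, f l) - ∏ l ∈ Finset.Ico (a + i) b, f l := by
      intro i hi
      rw [Finset.mem_range] at hi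
      have hab : a + i < b := by omega
      rw [Finset.prod_eq_prod_Ico_succ_bot hab]
      have : a + (i + 1) = a + i + 1 := by omega
      rw [this]
      ring
    rw [Finset.sum_congr rfl key, Finset.sum_range_sub (fun i => ∏ l ∈ Finset.Ico (a + i) b, f l)]
    have : a + (b - a) = b := by omega
    rw [this]
    simp

lemma prod_tendsto_zero (r : ℕ → ℝ)
    (hle : ∀ᶠ k in atTop, r k ≤ 1)
    (hdiv : Tendsto (fun n => ∑ l ∈ Finset.range n, r l) atTop atTop) (a : ℕ) :
    Tendsto (fun t => ∏ l ∈ Finset.Ico a t, (1 - r l)) atTop (nhds 0) := by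
  obtain ⟨T₀, hT₀⟩ := eventually_atTop.mp hle
  set b := max a T₀ with hb
  have hab : a ≤ b := le_max_left _ _
  have hbT : T₀ ≤ b := le_max_right _ _
  -- the tail product from b tends to 0
  have tail : Tendsto (fun t => ∏ l ∈ Finset.Ico b t, (1 - r l)) atTop (nhds 0) := by
    have hub : Tendsto (fun t => Real.exp (-(∑ l ∈ Finset.Ico b t, r l))) atTop (nhds 0) := by
      apply Real.tendsto_exp_atBot.comp
      apply Filter.tendsto_neg_atBot_iff.mpr
      have : Tendsto (fun t => ∑ l ∈ Finset.range t, r l - ∑ l ∈ Finset.range b, r l)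
          atTop atTop := hdiv.atTop_add tendsto_const_nhds
      apply this.congr'
      filter_upwards [eventually_ge_atTop b] with t ht
      rw [Finset.sum_Ico_eq_sub _ ht]
    have h0 : Tendsto (fun _ : ℕ => (0:ℝ)) atTop (nhds 0) := tendsto_const_nhds
    refine tendsto_of_tendsto_of_tendsto_of_le_of_le h0 hub ?_ ?_
    · intro t
      apply Finset.prod_nonneg
      intro l hl
      have := hT₀ l (le_trans hbT (Finset.mem_Ico.mp hl).1)
      linarith
    · intro t
      simp only
      rw [← Finset.sum_neg_distrib, Real.exp_sum]
      apply Finset.prod_le_prod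
      · intro l hl
        have := hT₀ l (le_trans hbT (Finset.mem_Ico.mp hl).1)
        linarith
      · intro l hl
        have := Real.add_one_le_exp (-(r l))
        linarith
  -- full product = head × tail eventually
  have : Tendsto (fun t => (∏ l ∈ Finset.Ico a b, (1 - r l)) * ∏ l ∈ Finset.Ico b t, (1 - r l))
      atTop (nhds 0) := by
    have := tail.const_mul (∏ l ∈ Finset.Ico a b, (1 - r l))
    simpa using this
  apply this.congr'
  filter_upwards [eventually_ge_atTop b] with t ht
  rw [Finset.prod_Ico_consecutive _ hab ht]

lemma main_abstract (r1 r2 : ℕ → ℝ) (h1 : ∀ k, 0 ≤ r1 k)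
    (hle : ∀ᶠ k in atTop, r2 k ≤ 1)
    (hdiv : Tendsto (fun n => ∑ l ∈ Finset.range n, r2 l) atTop atTop)
    (hratio : ∀ ε : ℝ, 0 < ε → ∀ᶠ k in atTop, r1 k ≤ ε * r2 k) (j : ℕ) :
    Tendsto (fun t => ∑ k ∈ Finset.Ico j t,
      (∏ l ∈ Finset.Ico (k+1) t, (1 - r2 l)) * r1 k) atTop (nhds 0) := by
  rw [NormedAddCommGroup.tendsto_nhds_zero]
  intro ε hε
  have hε2 : 0 < ε / 2 := by linarith
  obtain ⟨T₀, hT₀⟩ := eventually_atTop.mp (hle.and (hratio (ε/2) hε2))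
  set T := max T₀ j with hT
  have hjT : j ≤ T := le_max_right _ _
  have hTT₀ : T₀ ≤ T := le_max_left _ _
  -- head part tends to 0
  set A : ℕ → ℝ := fun t => ∑ k ∈ Finset.Ico j T,
      (∏ l ∈ Finset.Ico (k+1) t, (1 - r2 l)) * r1 k with hA
  have hAten : Tendsto A atTop (nhds 0) := by
    have : Tendsto (fun t => ∑ k ∈ Finset.Ico j T,
        (∏ l ∈ Finset.Ico (k+1) t, (1 - r2 l)) * r1 k) atTop
        (nhds (∑ k ∈ Finset.Ico j T, 0 * r1 k)) := by
      apply tendsto_finset_sum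
      intro k _
      exact (prod_tendsto_zero r2 hle hdiv (k+1)).mul_const (r1 k)
    simpa using this
  have hAev := (NormedAddCommGroup.tendsto_nhds_zero.mp hAten) (ε/2) hε2
  filter_upwards [eventually_ge_atTop T, hAev] with t hTt hAt
  -- split the sum
  have hsplit : ∑ k ∈ Finset.Ico j t, (∏ l ∈ Finset.Ico (k+1) t, (1 - r2 l)) * r1 k
      = A t + ∑ k ∈ Finset.Ico T t, (∏ l ∈ Finset.Ico (k+1) t, (1 - r2 l)) * r1 k := by
    rw [hA]
    exact (Finset.sum_Ico_consecutive _ hjT hTt).symm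
  set B : ℝ := ∑ k ∈ Finset.Ico T t, (∏ l ∈ Finset.Ico (k+1) t, (1 - r2 l)) * r1 k with hB
  have hprodnn : ∀ k ∈ Finset.Ico T t, 0 ≤ ∏ l ∈ Finset.Ico (k+1) t, (1 - r2 l) := by
    intro k hk
    apply Finset.prod_nonneg
    intro l hl
    have hl1 : T₀ ≤ l := by
      have := (Finset.mem_Ico.mp hl).1
      have := (Finset.mem_Ico.mp hk).1
      omega
    have := (hT₀ l hl1).1
    linarith
  have hBnn : 0 ≤ B := by
    apply Finset.sum_nonneg
    intro k hk
    exact mul_nonneg (hprodnn k hk) (h1 k)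
  have hBle : B ≤ ε / 2 := by
    have step1 : B ≤ ∑ k ∈ Finset.Ico T t,
        (∏ l ∈ Finset.Ico (k+1) t, (1 - r2 l)) * (ε/2 * r2 k) := by
      apply Finset.sum_le_sum
      intro k hk
      have hkT : T₀ ≤ k := le_trans hTT₀ (Finset.mem_Ico.mp hk).1
      exact mul_le_mul_of_nonneg_left (hT₀ k hkT).2 (hprodnn k hk)
    have step2 : ∑ k ∈ Finset.Ico T t,
        (∏ l ∈ Finset.Ico (k+1) t, (1 - r2 l)) * (ε/2 * r2 k)
        = ε/2 * (1 - ∏ l ∈ Finset.Ico T t, (1 - r2 l)) := by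
      rw [← tele_aux (fun l => 1 - r2 l) T t, Finset.mul_sum]
      apply Finset.sum_congr rfl
      intro k _
      ring
    have hprodTnn : 0 ≤ ∏ l ∈ Finset.Ico T t, (1 - r2 l) := by
      apply Finset.prod_nonneg
      intro l hl
      have := (hT₀ l (le_trans hTT₀ (Finset.mem_Ico.mp hl).1)).1
      linarith
    calc B ≤ ε/2 * (1 - ∏ l ∈ Finset.Ico T t, (1 - r2 l)) := by rw [← step2]; exact step1
      _ ≤ ε/2 * 1 := by
          apply mul_le_mul_of_nonneg_left _ (le_of_lt hε2)
          linarith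
      _ = ε/2 := mul_one _
  rw [hsplit]
  have : |A t + B| ≤ |A t| + |B| := abs_add_le _ _
  have hAabs : |A t| < ε/2 := by simpa [Real.norm_eq_abs] using hAt
  have hBabs : |B| ≤ ε/2 := by rw [abs_of_nonneg hBnn]; exact hBle
  simp only [Real.norm_eq_abs]
  linarith

theorem stmt_0 (c1 c2 δ1 δ2 : ℝ) (hc1 : 0 < c1) (hc2 : 0 < c2)
    (hδ2 : 0 < δ2) (hδ21 : δ2 < δ1) (hδ1 : δ1 < 1) (j : ℕ) :
    Tendsto (fun t : ℕ =>
      ∑ k ∈ Finset.Icc j (t - 1),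
        (∏ l ∈ Finset.Icc (k + 1) (t - 1), (1 - c2 / ((l : ℝ) + 1) ^ δ2)) *
          (c1 / ((k : ℝ) + 1) ^ δ1))
      atTop (nhds 0) := by
  set r1 : ℕ → ℝ := fun k => c1 / ((k : ℝ) + 1) ^ δ1 with hr1
  set r2 : ℕ → ℝ := fun k => c2 / ((k : ℝ) + 1) ^ δ2 with hr2
  have hpos : ∀ k : ℕ, (0:ℝ) < (k : ℝ) + 1 := fun k => by positivity
  have h1 : ∀ k, 0 ≤ r1 k := fun k => by
    apply div_nonneg hc1.le (Real.rpow_nonneg (hpos k).le _)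
  have hnat : Tendsto (fun k : ℕ => (k : ℝ) + 1) atTop atTop :=
    tendsto_natCast_atTop_atTop.atTop_add tendsto_const_nhds
  have hr2zero : Tendsto r2 atTop (nhds 0) := by
    have h := (tendsto_rpow_neg_atTop hδ2).comp hnat
    have : Tendsto (fun k : ℕ => c2 * ((k:ℝ)+1) ^ (-δ2)) atTop (nhds (c2 * 0)) :=
      h.const_mul c2
    rw [mul_zero] at this
    apply this.congr
    intro k
    rw [Real.rpow_neg (hpos k).le]
    ring
  have hle : ∀ᶠ k in atTop, r2 k ≤ 1 :=
    (hr2zero.eventually_lt_const (by norm_num : (0:ℝ) < 1)).mono fun k hk => hk.le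
  have hdiv : Tendsto (fun n => ∑ l ∈ Finset.range n, r2 l) atTop atTop := by
    rw [← not_summable_iff_tendsto_nat_atTop_of_nonneg (fun k => by
      exact div_nonneg hc2.le (Real.rpow_nonneg (hpos k).le _))]
    intro hsum
    have h2 : Summable (fun k : ℕ => ((k:ℝ)+1) ^ (-δ2)) := by
      have := hsum.div_const c2
      apply this.congr
      intro k
      field_simp [hr2]
      rw [Real.rpow_neg (hpos k).le]
      field_simp
      simp only [hr2]
      rw [div_mul_cancel₀ _ (Real.rpow_pos_of_pos (hpos k) _).ne']
    have h3 : Summable (fun k : ℕ => ((k:ℕ):ℝ) ^ (-δ2)) := by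
      rw [← summable_nat_add_iff 1]
      apply h2.congr
      intro k
      push_cast
      ring_nf
    rw [Real.summable_nat_rpow] at h3
    linarith
  have hratio : ∀ ε : ℝ, 0 < ε → ∀ᶠ k in atTop, r1 k ≤ ε * r2 k := by
    intro ε hε
    have hrat : Tendsto (fun k : ℕ => (c1/c2) * ((k:ℝ)+1) ^ (δ2 - δ1)) atTop (nhds 0) := by
      have h := (tendsto_rpow_neg_atTop (by linarith : 0 < δ1 - δ2)).comp hnat
      have h' : Tendsto (fun k : ℕ => (c1/c2) * ((k:ℝ)+1) ^ (-(δ1 - δ2))) atTop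
          (nhds ((c1/c2) * 0)) := h.const_mul _
      rw [mul_zero] at h'
      apply h'.congr
      intro k
      norm_num
    filter_upwards [hrat.eventually_le_const hε] with k hk
    have key : r1 k = ((c1/c2) * ((k:ℝ)+1) ^ (δ2 - δ1)) * r2 k := by
      simp only [hr1, hr2]
      rw [Real.rpow_sub (hpos k)]
      field_simp
    rw [key]
    apply mul_le_mul_of_nonneg_right hk
    exact div_nonneg hc2.le (Real.rpow_nonneg (hpos k).le _)
  have habs := main_abstract r1 r2 h1 hle hdiv hratio j
  apply habs.congr'
  filter_upwards [eventually_ge_atTop 1] with t ht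
  have h1t : t - 1 + 1 = t := by omega
  rw [← Finset.Ico_add_one_right_eq_Icc, h1t]
  apply Finset.sum_congr rfl
  intro k _
  rw [← Finset.Ico_add_one_right_eq_Icc, h1t]
end

section
/- Let $r_1(t) = c_1/(t+1)^{\delta}$ and $r_2(t) = c_2/(t+1)^{\delta}$ with $c_1, c_2 > 0$ and $0 < \delta < 1$ (i.e., the same exponent). Then there exists a constant $B > 0$ such that for all sufficiently large nonnegative integers $j < t$, $0 \le \sum_{k=j}^{t-1} \left(\prod_{l=k+1}^{t-1} (1 - r_2(l))\right) r_1(k) \le B$, where $B$ can be chosen independently of $t$ and $j$. -/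
open Filter Finset

lemma telescope_aux (r : ℕ → ℝ) (j : ℕ) : ∀ m, j ≤ m →
    ∑ k ∈ Finset.Icc j m, (∏ l ∈ Finset.Icc (k+1) m, (1 - r l)) * r k
      = 1 - ∏ l ∈ Finset.Icc j m, (1 - r l) := by
  intro m
  induction m with
  | zero => intro h; interval_cases j; simp
  | succ n ih =>
    intro h
    rcases Nat.lt_or_ge j (n+1) with hlt | hge
    · have hj : j ≤ n := Nat.lt_succ_iff.mp hlt
      rw [← Finset.Ico_add_one_right_eq_Icc, Finset.sum_Ico_succ_top (by omega),
          Finset.Ico_add_one_right_eq_Icc]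
      have step : ∀ k ∈ Finset.Icc j n,
          (∏ l ∈ Finset.Icc (k+1) (n+1), (1 - r l)) * r k
          = (1 - r (n+1)) * ((∏ l ∈ Finset.Icc (k+1) n, (1 - r l)) * r k) := by
        intro k hk
        simp only [Finset.mem_Icc] at hk
        rw [← Finset.Ico_add_one_right_eq_Icc, Finset.prod_Ico_succ_top (by omega),
            Finset.Ico_add_one_right_eq_Icc]
        ring
      rw [Finset.sum_congr rfl step, ← Finset.mul_sum, ih hj]
      have hP : ∏ l ∈ Finset.Icc j (n+1), (1 - r l)
          = (∏ l ∈ Finset.Icc j n, (1 - r l)) * (1 - r (n+1)) := by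
        rw [← Finset.Ico_add_one_right_eq_Icc, Finset.prod_Ico_succ_top (by omega),
            Finset.Ico_add_one_right_eq_Icc]
      have hempty : Finset.Icc (n+1+1) (n+1) = (∅ : Finset ℕ) :=
        Finset.Icc_eq_empty (by omega)
      rw [hempty, Finset.prod_empty, Finset.Ico_add_one_right_eq_Icc, hP]
      ring
    · have hj : j = n+1 := le_antisymm h hge
      subst hj
      have hempty : Finset.Icc (n+1+1) (n+1) = (∅ : Finset ℕ) :=
        Finset.Icc_eq_empty (by omega)
      simp [Finset.Icc_self, hempty]

theorem stmt_1 (c1 c2 δ : ℝ) (hc1 : 0 < c1) (hc2 : 0 < c2)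
    (hδ : 0 < δ) (hδ1 : δ < 1) :
    ∃ B : ℝ, 0 < B ∧ ∃ T : ℕ, ∀ j t : ℕ, T ≤ j → j < t →
      0 ≤ (∑ k ∈ Finset.Icc j (t - 1),
            (∏ l ∈ Finset.Icc (k + 1) (t - 1), (1 - c2 / ((l : ℝ) + 1) ^ δ)) *
              (c1 / ((k : ℝ) + 1) ^ δ)) ∧
      (∑ k ∈ Finset.Icc j (t - 1),
            (∏ l ∈ Finset.Icc (k + 1) (t - 1), (1 - c2 / ((l : ℝ) + 1) ^ δ)) *
              (c1 / ((k : ℝ) + 1) ^ δ)) ≤ B := by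
  set r : ℕ → ℝ := fun l => c2 / ((l : ℝ) + 1) ^ δ with hr
  refine ⟨c1 / c2, div_pos hc1 hc2, ⌈c2 ^ (1/δ)⌉₊, ?_⟩
  intro j t hT hjt
  -- basic facts about r on [T, ∞)
  have hrpos : ∀ l : ℕ, 0 < r l := by
    intro l
    exact div_pos hc2 (Real.rpow_pos_of_pos (by positivity) δ)
  have hrle : ∀ l : ℕ, ⌈c2 ^ (1/δ)⌉₊ ≤ l → r l ≤ 1 := by
    intro l hl
    have h1 : c2 ^ (1/δ) ≤ (l : ℝ) + 1 := by
      have := Nat.le_ceil (c2 ^ (1/δ))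
      have hl' : (⌈c2 ^ (1/δ)⌉₊ : ℝ) ≤ l := Nat.cast_le.mpr hl
      linarith
    have h2 : c2 ≤ ((l : ℝ) + 1) ^ δ := by
      calc c2 = (c2 ^ (1/δ)) ^ δ := by
              rw [← Real.rpow_mul hc2.le, one_div, inv_mul_cancel₀ (ne_of_gt hδ),
                Real.rpow_one]
        _ ≤ ((l : ℝ) + 1) ^ δ := by
              apply Real.rpow_le_rpow (Real.rpow_nonneg hc2.le _) h1 hδ.le
    rw [hr]
    exact div_le_one_of_le₀ h2 (by positivity)
  have hfac : ∀ l : ℕ, ⌈c2 ^ (1/δ)⌉₊ ≤ l → 0 ≤ 1 - r l := fun l hl => by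
    linarith [hrle l hl]
  -- rewrite c1-term as (c1/c2) * r k
  have hrw : ∀ k : ℕ, c1 / ((k : ℝ) + 1) ^ δ = (c1 / c2) * r k := by
    intro k
    rw [hr]
    field_simp
  have key := telescope_aux r j (t-1) (by omega)
  have hprod_nonneg : ∀ k, j ≤ k →
      0 ≤ ∏ l ∈ Finset.Icc (k+1) (t-1), (1 - r l) := by
    intro k hk
    apply Finset.prod_nonneg
    intro l hl
    simp only [Finset.mem_Icc] at hl
    exact hfac l (by omega)
  constructor
  · apply Finset.sum_nonneg
    intro k hk
    simp only [Finset.mem_Icc] at hk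
    have := hprod_nonneg k hk.1
    have : (0:ℝ) ≤ c1 / ((k : ℝ) + 1) ^ δ := by positivity
    apply mul_nonneg (hprod_nonneg k hk.1) this
  · have hsum_eq : (∑ k ∈ Finset.Icc j (t - 1),
        (∏ l ∈ Finset.Icc (k + 1) (t - 1), (1 - r l)) * (c1 / ((k : ℝ) + 1) ^ δ))
        = (c1 / c2) * ∑ k ∈ Finset.Icc j (t - 1),
            (∏ l ∈ Finset.Icc (k + 1) (t - 1), (1 - r l)) * r k := by
      rw [Finset.mul_sum]
      apply Finset.sum_congr rfl
      intro k hk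
      rw [hrw k]; ring
    rw [hsum_eq, key]
    have hP : 0 ≤ ∏ l ∈ Finset.Icc j (t-1), (1 - r l) := by
      apply Finset.prod_nonneg
      intro l hl
      simp only [Finset.mem_Icc] at hl
      exact hfac l (by omega)
    have : 1 - ∏ l ∈ Finset.Icc j (t-1), (1 - r l) ≤ 1 := by linarith
    calc (c1/c2) * (1 - ∏ l ∈ Finset.Icc j (t-1), (1 - r l))
        ≤ (c1/c2) * 1 := by
          apply mul_le_mul_of_nonneg_left this (le_of_lt (div_pos hc1 hc2))
      _ = c1/c2 := mul_one _
end

section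
/- Consider the scalar recursion $v_{t+1} = (1 - r_2(t)) v_t + r_1(t)$ with $r_1(t) = c_1/(t+1)^{\delta_1}$, $r_2(t) = c_2/(t+1)^{\delta_2}$, $c_1, c_2 > 0$, and $0 < \delta_2 < \delta_1 < 1$. Then $\lim_{t\to\infty} (t+1)^{\delta_0} v_t = 0$ for all $0 \le \delta_0 < \delta_1 - \delta_2$ and all initial conditions $v_0 \in \mathbb{R}$. -/
open Filter

theorem stmt_2 (c1 c2 δ1 δ2 : ℝ) (hc1 : 0 < c1) (hc2 : 0 < c2)
    (hδ2 : 0 < δ2) (hδ21 : δ2 < δ1) (hδ1 : δ1 < 1)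
    (v : ℕ → ℝ)
    (hrec : ∀ t : ℕ, v (t + 1) =
      (1 - c2 / ((t : ℝ) + 1) ^ δ2) * v t + c1 / ((t : ℝ) + 1) ^ δ1)
    (δ0 : ℝ) (hδ0 : 0 ≤ δ0) (hδ0' : δ0 < δ1 - δ2) :
    Tendsto (fun t : ℕ => ((t : ℝ) + 1) ^ δ0 * v t) atTop (nhds 0) := by
  set δ : ℝ := (δ0 + (δ1 - δ2)) / 2 with hδdef
  have hδpos : 0 < δ := by
    have : 0 < δ1 - δ2 := by linarith
    rw [hδdef]; linarith
  have hδlt : δ < δ1 - δ2 := by rw [hδdef]; linarith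
  have hδ0δ : δ0 < δ := by rw [hδdef]; linarith
  have hδle1 : δ ≤ 1 := by nlinarith
  -- base tendsto
  have hbase : Tendsto (fun t : ℕ => (t : ℝ) + 1) atTop atTop :=
    tendsto_atTop_add_const_right _ 1 tendsto_natCast_atTop_atTop
  -- eventual side conditions
  have hev1 : ∀ᶠ t : ℕ in atTop, c2 ≤ ((t : ℝ) + 1) ^ δ2 :=
    ((tendsto_rpow_atTop hδ2).comp hbase).eventually_ge_atTop c2
  have hev2 : ∀ᶠ t : ℕ in atTop, 2 / c2 ≤ ((t : ℝ) + 1) ^ (1 - δ2) :=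
    ((tendsto_rpow_atTop (by linarith : (0:ℝ) < 1 - δ2)).comp hbase).eventually_ge_atTop (2 / c2)
  obtain ⟨T, hT⟩ := (hev1.and hev2).exists_forall_of_atTop
  set u : ℕ → ℝ := fun t => ((t : ℝ) + 1) ^ δ * v t with hu
  set M : ℝ := max (|u T|) (4 * c1 / c2) with hM
  have hMnn : 0 ≤ M := le_trans (abs_nonneg _) (le_max_left _ _)
  have hM2 : 4 * c1 / c2 ≤ M := le_max_right _ _
  -- main boundedness
  have hbound : ∀ t, T ≤ t → |u t| ≤ M := by
    intro t ht
    induction t, ht using Nat.le_induction with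
    | base => exact le_max_left _ _
    | succ t ht ih =>
      obtain ⟨h1, h2⟩ := hT t ht
      set s : ℝ := (t : ℝ) + 1 with hs
      have hs1 : (1 : ℝ) ≤ s := by
        rw [hs]; have : (0:ℝ) ≤ (t:ℝ) := Nat.cast_nonneg t; linarith
      have hspos : (0 : ℝ) < s := by linarith
      have hsp1 : (0 : ℝ) < s + 1 := by linarith
      have hsd2 : (0 : ℝ) < s ^ δ2 := Real.rpow_pos_of_pos hspos _
      have hsd1 : (0 : ℝ) < s ^ δ1 := Real.rpow_pos_of_pos hspos _
      have hsd : (0 : ℝ) < s ^ δ := Real.rpow_pos_of_pos hspos _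
      -- r2 ≤ 1
      have hr2le1 : c2 / s ^ δ2 ≤ 1 := by
        rw [div_le_one hsd2]; exact h1
      have hr2pos : 0 < c2 / s ^ δ2 := by positivity
      -- 1/s ≤ r2 / 2
      have hkey : 1 / s ≤ c2 / s ^ δ2 / 2 := by
        have hss : s ^ (1 - δ2) * s ^ δ2 = s := by
          rw [← Real.rpow_add hspos]; simp
        rw [div_le_div_iff₀ hspos (by norm_num)]
        have h2' : 2 / c2 * c2 ≤ s ^ (1 - δ2) * c2 :=
          mul_le_mul_of_nonneg_right h2 hc2.le
        rw [div_mul_cancel₀ _ hc2.ne'] at h2'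
        calc (1:ℝ) * 2 = 2 := by ring
          _ ≤ s ^ (1 - δ2) * c2 := h2'
          _ = c2 * s ^ (1 - δ2) := by ring
          _ = c2 / s ^ δ2 * s := by
              rw [div_mul_eq_mul_div, eq_div_iff hsd2.ne', mul_assoc, hss]
      -- a := ((s+1)/s)^δ
      set a : ℝ := ((s + 1) / s) ^ δ with ha
      have hanonneg : 0 ≤ a := Real.rpow_nonneg (by positivity) _
      have habase : (1 : ℝ) ≤ (s + 1) / s := by
        rw [le_div_iff₀ hspos]; linarith
      have hale : a ≤ (s + 1) / s := by
        calc a ≤ ((s + 1) / s) ^ (1 : ℝ) :=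
              Real.rpow_le_rpow_of_exponent_le habase hδle1
          _ = (s + 1) / s := Real.rpow_one _
      have hale2 : a ≤ 2 := by
        refine hale.trans ?_
        rw [div_le_iff₀ hspos]; linarith
      -- decompose u (t+1)
      have hsplit : (s + 1) ^ δ = a * s ^ δ := by
        rw [ha, ← Real.mul_rpow (by positivity) hspos.le, div_mul_cancel₀ _ hspos.ne']
      have hut1 : u (t + 1) = a * (1 - c2 / s ^ δ2) * u t + (s + 1) ^ δ * (c1 / s ^ δ1) := by
        have : ((t + 1 : ℕ) : ℝ) + 1 = s + 1 := by push_cast [hs]; ring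
        simp only [hu, this, hrec t, ← hs]
        rw [hsplit]; ring
      -- bound first coefficient
      have hcoef : a * (1 - c2 / s ^ δ2) ≤ 1 - c2 / s ^ δ2 / 2 := by
        have h1mr : 0 ≤ 1 - c2 / s ^ δ2 := by linarith
        calc a * (1 - c2 / s ^ δ2) ≤ (s + 1) / s * (1 - c2 / s ^ δ2) :=
              mul_le_mul_of_nonneg_right hale h1mr
          _ = (1 + 1 / s) * (1 - c2 / s ^ δ2) := by
              rw [add_div, div_self hspos.ne']
          _ = 1 - c2 / s ^ δ2 + 1 / s - 1 / s * (c2 / s ^ δ2) := by ring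
          _ ≤ 1 - c2 / s ^ δ2 + c2 / s ^ δ2 / 2 - 0 := by
              have : 0 ≤ 1 / s * (c2 / s ^ δ2) := by positivity
              linarith
          _ = 1 - c2 / s ^ δ2 / 2 := by ring
      have hcoefnn : 0 ≤ a * (1 - c2 / s ^ δ2) := by
        have : 0 ≤ 1 - c2 / s ^ δ2 := by linarith
        positivity
      -- bound second term
      have hterm2 : (s + 1) ^ δ * (c1 / s ^ δ1) ≤ c2 / s ^ δ2 / 2 * M := by
        have e1 : (s + 1) ^ δ * (c1 / s ^ δ1) = a * c1 * (s ^ δ / s ^ δ1) := by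
          rw [hsplit]; ring
        have e2 : s ^ δ / s ^ δ1 = s ^ (δ - δ1) := by
          rw [← Real.rpow_sub hspos]
        have e3 : s ^ (δ - δ1) ≤ s ^ (-δ2) :=
          Real.rpow_le_rpow_of_exponent_le hs1 (by linarith)
        have e4 : s ^ (-δ2) = 1 / s ^ δ2 := by
          rw [Real.rpow_neg hspos.le, one_div]
        calc (s + 1) ^ δ * (c1 / s ^ δ1) = a * c1 * (s ^ δ / s ^ δ1) := e1
          _ = a * c1 * s ^ (δ - δ1) := by rw [e2]
          _ ≤ 2 * c1 * (1 / s ^ δ2) := by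
              have hsδδ1 : 0 ≤ s ^ (δ - δ1) := (Real.rpow_pos_of_pos hspos _).le
              have : a * c1 ≤ 2 * c1 := mul_le_mul_of_nonneg_right hale2 hc1.le
              calc a * c1 * s ^ (δ - δ1) ≤ 2 * c1 * s ^ (δ - δ1) :=
                    mul_le_mul_of_nonneg_right this hsδδ1
                _ ≤ 2 * c1 * s ^ (-δ2) := by
                    have : (0:ℝ) ≤ 2 * c1 := by positivity
                    exact mul_le_mul_of_nonneg_left e3 this
                _ = 2 * c1 * (1 / s ^ δ2) := by rw [e4]
          _ = c2 / s ^ δ2 / 2 * (4 * c1 / c2) := by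
              field_simp; ring
          _ ≤ c2 / s ^ δ2 / 2 * M := by
              have : 0 ≤ c2 / s ^ δ2 / 2 := by positivity
              exact mul_le_mul_of_nonneg_left hM2 this
      -- combine
      calc |u (t + 1)| ≤ |a * (1 - c2 / s ^ δ2) * u t| + |(s + 1) ^ δ * (c1 / s ^ δ1)| := by
            rw [hut1]; exact abs_add_le _ _
        _ = a * (1 - c2 / s ^ δ2) * |u t| + (s + 1) ^ δ * (c1 / s ^ δ1) := by
            have hpos2 : 0 ≤ (s + 1) ^ δ * (c1 / s ^ δ1) :=
              mul_nonneg (Real.rpow_nonneg hsp1.le _) (by positivity)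
            rw [abs_mul, abs_of_nonneg hcoefnn, abs_of_nonneg hpos2]
        _ ≤ (1 - c2 / s ^ δ2 / 2) * M + c2 / s ^ δ2 / 2 * M := by
            refine add_le_add ?_ hterm2
            calc a * (1 - c2 / s ^ δ2) * |u t| ≤ a * (1 - c2 / s ^ δ2) * M :=
                  mul_le_mul_of_nonneg_left ih hcoefnn
              _ ≤ (1 - c2 / s ^ δ2 / 2) * M := mul_le_mul_of_nonneg_right hcoef hMnn
        _ = M := by ring
  -- squeeze
  have hgtendsto : Tendsto (fun t : ℕ => M * ((t : ℝ) + 1) ^ (δ0 - δ)) atTop (nhds 0) := by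
    have h := (tendsto_rpow_neg_atTop (by linarith : (0:ℝ) < δ - δ0)).comp hbase
    have h' : Tendsto (fun t : ℕ => ((t : ℝ) + 1) ^ (δ0 - δ)) atTop (nhds 0) := by
      simpa [Function.comp_def, neg_sub] using h
    simpa using h'.const_mul M
  apply squeeze_zero_norm' _ hgtendsto
  filter_upwards [eventually_ge_atTop T] with t ht
  have hspos : (0 : ℝ) < (t : ℝ) + 1 := by positivity
  have hiden : ((t : ℝ) + 1) ^ δ0 * v t = ((t : ℝ) + 1) ^ (δ0 - δ) * u t := by
    rw [hu]
    rw [← mul_assoc, ← Real.rpow_add hspos]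
    ring_nf
  rw [Real.norm_eq_abs, hiden, abs_mul,
    abs_of_nonneg (Real.rpow_pos_of_pos hspos _).le, mul_comm]
  exact mul_le_mul (hbound t ht) le_rfl (Real.rpow_pos_of_pos hspos _).le hMnn
end

section
/- Consider the scalar recursion $v_{t+1} = (1 - c_3 r_2(t) + c_4 r_1(t)) v_t + c_5 r_1(t)$ where $r_1(t) = c_1/(t+1)^{\delta_1}$, $r_2(t) = c_2/(t+1)^{\delta_2}$, $c_1,\dots,c_5 > 0$, and $0 < \delta_2 < \delta_1 < 1$. Then $\lim_{t\to\infty} (t+1)^{\delta_0} v_t = 0$ for all $0 \le \delta_0 < \delta_1 - \delta_2$ and all initial conditions $v_0 \in \mathbb{R}$. -/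
open Filter

theorem stmt_3 (c1 c2 c3 c4 c5 δ1 δ2 : ℝ)
    (hc1 : 0 < c1) (hc2 : 0 < c2) (hc3 : 0 < c3) (hc4 : 0 < c4) (hc5 : 0 < c5)
    (hδ2 : 0 < δ2) (hδ21 : δ2 < δ1) (hδ1 : δ1 < 1)
    (v : ℕ → ℝ)
    (hrec : ∀ t : ℕ, v (t + 1) =
      (1 - c3 * (c2 / ((t : ℝ) + 1) ^ δ2) + c4 * (c1 / ((t : ℝ) + 1) ^ δ1)) * v t
        + c5 * (c1 / ((t : ℝ) + 1) ^ δ1))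
    (δ0 : ℝ) (hδ0 : 0 ≤ δ0) (hδ0' : δ0 < δ1 - δ2) :
    Tendsto (fun t : ℕ => ((t : ℝ) + 1) ^ δ0 * v t) atTop (nhds 0) := by
  set γ : ℝ := δ1 - δ2 with hγdef
  have hγ0 : 0 < γ := by simp [hγdef]; linarith
  have hγ1 : γ < 1 := by simp [hγdef]; linarith
  have hPpos : ∀ t : ℕ, (0:ℝ) < (t:ℝ) + 1 := fun t => by positivity
  have hP1 : ∀ t : ℕ, (1:ℝ) ≤ (t:ℝ) + 1 := fun t => by
    have := Nat.cast_nonneg (α := ℝ) t; linarith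
  have hPtop : Tendsto (fun t : ℕ => (t:ℝ) + 1) atTop atTop :=
    tendsto_atTop_add_const_right _ 1 tendsto_natCast_atTop_atTop
  have hpow0 : ∀ p : ℝ, 0 < p →
      Tendsto (fun t : ℕ => ((t:ℝ)+1) ^ (-p)) atTop (nhds 0) :=
    fun p hp => (tendsto_rpow_neg_atTop hp).comp hPtop
  -- key rpow identity
  have hkey : ∀ t : ℕ, ((t:ℝ)+1) ^ (-γ) * ((t:ℝ)+1) ^ (-δ2) = ((t:ℝ)+1) ^ (-δ1) := by
    intro t
    rw [← Real.rpow_add (hPpos t)]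
    congr 1
    simp [hγdef]; ring
  -- eventual conditions
  have hcond1 : ∀ᶠ t : ℕ in atTop,
      c4*c1*((t:ℝ)+1)^(-γ) + γ*((t:ℝ)+1)^(-(1-δ2)) ≤ c3*c2/2 := by
    have h1 : Tendsto (fun t : ℕ => c4*c1*((t:ℝ)+1)^(-γ) + γ*((t:ℝ)+1)^(-(1-δ2)))
        atTop (nhds (c4*c1*0 + γ*0)) :=
      ((hpow0 γ hγ0).const_mul _).add (((hpow0 (1-δ2) (by linarith)).const_mul _))
    have h2 : c4*c1*0 + γ*0 < c3*c2/2 := by simp; positivity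
    exact h1.eventually_le_const h2
  have hcond2 : ∀ᶠ t : ℕ in atTop, c3*c2*((t:ℝ)+1)^(-δ2) ≤ 1 := by
    have h1 : Tendsto (fun t : ℕ => c3*c2*((t:ℝ)+1)^(-δ2)) atTop (nhds (c3*c2*0)) :=
      (hpow0 δ2 hδ2).const_mul _
    exact h1.eventually_le_const (by simp)
  obtain ⟨T, hT⟩ := eventually_atTop.1 (hcond1.and hcond2)
  set M : ℝ := max (2*c5*c1/(c3*c2)) (|v T| * ((T:ℝ)+1)^γ) with hMdef
  have hM0 : 0 ≤ M := le_trans (by positivity) (le_max_left _ _)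
  have hM1 : 2*c5*c1/(c3*c2) ≤ M := le_max_left _ _
  -- Bernoulli step
  have bern : ∀ P : ℝ, 1 ≤ P → P^(-γ) * (1 - γ/P) ≤ (P+1)^(-γ) := by
    intro P hPge
    have hP0 : (0:ℝ) < P := by linarith
    have hx : γ/P < 1 := by
      rw [div_lt_one hP0]; linarith
    have hinv : (0:ℝ) < 1/P := by positivity
    have hb : (1 + 1/P)^γ ≤ 1 + γ*(1/P) :=
      rpow_one_add_le_one_add_mul_self (by linarith) hγ0.le hγ1.le
    have hsplit : (P+1)^γ = P^γ * (1 + 1/P)^γ := by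
      rw [← Real.mul_rpow hP0.le (by positivity)]
      congr 1
      field_simp
    have hmain : (1 - γ/P) * (P+1)^γ ≤ P^γ := by
      rw [hsplit]
      have h1 : (1 - γ/P) * (P^γ * (1 + 1/P)^γ) ≤ (1 - γ/P) * (P^γ * (1 + γ*(1/P))) := by
        apply mul_le_mul_of_nonneg_left _ (by linarith)
        exact mul_le_mul_of_nonneg_left hb (Real.rpow_nonneg hP0.le γ)
      have h2 : (1 - γ/P) * (P^γ * (1 + γ*(1/P))) ≤ P^γ := by
        have hPγ : (0:ℝ) ≤ P^γ := Real.rpow_nonneg hP0.le γ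
        have : (1 - γ/P) * (1 + γ*(1/P)) ≤ 1 := by
          have : γ/P = γ * (1/P) := by ring
          nlinarith [sq_nonneg (γ * (1/P))]
        nlinarith
      linarith
    have hPγ : (0:ℝ) < P^γ := Real.rpow_pos_of_pos hP0 γ
    have hP1γ : (0:ℝ) < (P+1)^γ := Real.rpow_pos_of_pos (by linarith) γ
    rw [Real.rpow_neg hP0.le, Real.rpow_neg (by linarith : (0:ℝ) ≤ P+1),
      inv_mul_eq_div, inv_eq_one_div, div_le_div_iff₀ hPγ hP1γ]
    linarith
  -- main induction
  have main : ∀ n : ℕ, |v (T + n)| ≤ M * (((T+n : ℕ):ℝ)+1) ^ (-γ) := by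
    intro n
    induction n with
    | zero =>
      have h1 : |v T| * ((T:ℝ)+1)^γ ≤ M := le_max_right _ _
      have h2 : (((T+0:ℕ):ℝ)+1) ^ (-γ) = (((T:ℝ)+1)^γ)⁻¹ := by
        simp [Real.rpow_neg (hPpos T).le]
      have hpos : (0:ℝ) < ((T:ℝ)+1)^γ := Real.rpow_pos_of_pos (hPpos T) γ
      rw [h2, ← div_eq_mul_inv, le_div_iff₀ hpos]
      exact h1
    | succ n ih =>
      set t : ℕ := T + n with htdef
      set P : ℝ := (t:ℝ) + 1 with hPdef
      have hP0 : (0:ℝ) < P := hPpos t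
      have hPge : (1:ℝ) ≤ P := hP1 t
      obtain ⟨h1, h2⟩ := hT t (Nat.le_add_right T n)
      -- notation
      set a : ℝ := c3*c2*P^(-δ2) with hadef
      set b : ℝ := c4*c1*P^(-δ1) with hbdef
      set c : ℝ := c5*c1*P^(-δ1) with hcdef
      have ha0 : 0 ≤ a := by positivity
      have hb0 : 0 ≤ b := by positivity
      have hc0 : 0 ≤ c := by positivity
      -- rewrite the recursion
      have hrw : v (t + 1) = (1 - a + b) * v t + c := by
        have e1 : c2 / P^δ2 = c2 * P^(-δ2) := by
          rw [Real.rpow_neg hP0.le]; ring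
        have e2 : c1 / P^δ1 = c1 * P^(-δ1) := by
          rw [Real.rpow_neg hP0.le]; ring
        have := hrec t
        rw [e1, e2] at this
        rw [this, hadef, hbdef, hcdef]; ring
      -- b + γ/P ≤ a/2
      have hbsmall : b + γ/P ≤ (c3*c2/2) * P^(-δ2) := by
        have hmul := mul_le_mul_of_nonneg_right h1
          (Real.rpow_nonneg hP0.le (-δ2))
        have e3 : P^(-(1-δ2)) * P^(-δ2) = P⁻¹ := by
          rw [← Real.rpow_add hP0]
          have e : -(1-δ2) + -δ2 = -1 := by ring
          rw [e, Real.rpow_neg_one]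
        have e4 : P^(-γ) * P^(-δ2) = P^(-δ1) := hkey t
        have eq1 : (c4*c1*P^(-γ) + γ*P^(-(1-δ2))) * P^(-δ2) = b + γ/P := by
          rw [hbdef, add_mul, mul_assoc (c4*c1) _ _, e4, mul_assoc γ _ _, e3,
            div_eq_mul_inv]
        rw [← eq1]
        exact hmul
      have haP : a ≤ 1 := h2
      -- coefficient nonneg
      have hcoef : 0 ≤ 1 - a + b := by linarith
      -- the key product bound: c ≤ M * P^(-γ) * (a - b - γ/P)
      have hprod : c ≤ M * P^(-γ) * (a - b - γ/P) := by
        have step1 : (c3*c2/2) * P^(-δ2) ≤ a - b - γ/P := by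
          have : a = c3*c2*P^(-δ2) := rfl
          rw [this]
          have : c3*c2*P^(-δ2) - (c3*c2/2) * P^(-δ2) = (c3*c2/2)*P^(-δ2) := by ring
          linarith [hbsmall]
        have step2 : M * P^(-γ) * ((c3*c2/2) * P^(-δ2)) ≤ M * P^(-γ) * (a - b - γ/P) :=
          mul_le_mul_of_nonneg_left step1 (by positivity)
        have step3 : c ≤ M * P^(-γ) * ((c3*c2/2) * P^(-δ2)) := by
          have e4 : P^(-γ) * P^(-δ2) = P^(-δ1) := hkey t
          have : M * P^(-γ) * ((c3*c2/2) * P^(-δ2)) = M * (c3*c2/2) * P^(-δ1) := by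
            rw [← e4]; ring
          rw [this, hcdef]
          have hM' : 2*c5*c1/(c3*c2) * (c3*c2/2) ≤ M * (c3*c2/2) :=
            mul_le_mul_of_nonneg_right hM1 (by positivity)
          have : 2*c5*c1/(c3*c2) * (c3*c2/2) = c5*c1 := by
            field_simp
          rw [this] at hM'
          exact mul_le_mul_of_nonneg_right hM' (Real.rpow_nonneg hP0.le _)
        linarith
      -- chain
      have hb1 : |v (t+1)| ≤ (1 - a + b) * |v t| + c := by
        rw [hrw]
        calc |(1 - a + b) * v t + c| ≤ |(1 - a + b) * v t| + |c| := abs_add_le _ _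
          _ = (1 - a + b) * |v t| + c := by
              rw [abs_mul, abs_of_nonneg hcoef, abs_of_nonneg hc0]
      have hb2 : (1 - a + b) * |v t| ≤ (1 - a + b) * (M * P^(-γ)) :=
        mul_le_mul_of_nonneg_left ih hcoef
      have hb3 : (1 - a + b) * (M * P^(-γ)) + c ≤ M * P^(-γ) * (1 - γ/P) := by
        calc (1 - a + b) * (M * P^(-γ)) + c
            ≤ (1 - a + b) * (M * P^(-γ)) + M * P^(-γ) * (a - b - γ/P) :=
              add_le_add_right hprod _
          _ = M * P^(-γ) * (1 - γ/P) := by ring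
      have hb4 : M * P^(-γ) * (1 - γ/P) ≤ M * (P+1)^(-γ) := by
        have := bern P hPge
        calc M * P^(-γ) * (1 - γ/P) = M * (P^(-γ) * (1 - γ/P)) := by ring
          _ ≤ M * (P+1)^(-γ) := mul_le_mul_of_nonneg_left this hM0
      have hfinal : |v (t+1)| ≤ M * (P+1)^(-γ) :=
        hb1.trans ((add_le_add_left hb2 c).trans (hb3.trans hb4))
      have hcast : (((T+(n+1) : ℕ)):ℝ) + 1 = P + 1 := by
        rw [hPdef, htdef]; push_cast; ring
      rw [hcast]
      have htn : T + (n+1) = t + 1 := by omega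
      rw [htn]
      exact hfinal
  -- squeeze
  have hbound : ∀ᶠ t : ℕ in atTop,
      ‖((t:ℝ)+1)^δ0 * v t‖ ≤ M * ((t:ℝ)+1)^(-(γ-δ0)) := by
    rw [eventually_atTop]
    refine ⟨T, fun t ht => ?_⟩
    obtain ⟨n, rfl⟩ := Nat.exists_eq_add_of_le ht
    have h := main n
    have hP0 := hPpos (T+n)
    have e : (((T+n:ℕ):ℝ)+1)^δ0 * (((T+n:ℕ):ℝ)+1)^(-γ) = (((T+n:ℕ):ℝ)+1)^(-(γ-δ0)) := by
      rw [← Real.rpow_add hP0]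
      congr 1; ring
    rw [Real.norm_eq_abs, abs_mul, abs_of_nonneg (Real.rpow_nonneg hP0.le δ0)]
    calc (((T+n:ℕ):ℝ)+1)^δ0 * |v (T+n)| ≤ (((T+n:ℕ):ℝ)+1)^δ0 * (M * (((T+n:ℕ):ℝ)+1)^(-γ)) :=
          mul_le_mul_of_nonneg_left h (Real.rpow_nonneg hP0.le δ0)
      _ = M * (((T+n:ℕ):ℝ)+1)^(-(γ-δ0)) := by rw [← e]; ring
  have hlim : Tendsto (fun t : ℕ => M * ((t:ℝ)+1)^(-(γ-δ0))) atTop (nhds 0) := by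
    have := (hpow0 (γ-δ0) (by simp [hγdef]; linarith)).const_mul M
    simpa using this
  exact squeeze_zero_norm' hbound hlim
end

section
/- Consider the coupled scalar recursions $v_{t+1} = (1 - c_3 r_1(t)) v_t + c_4 r_1(t) w_t$ and $w_{t+1} = (1 - c_5 r_2(t) + c_6 r_1(t)) w_t + c_7 r_1(t) v_t$, where $r_1(t) = c_1/(t+1)^{\delta_1}$, $r_2(t) = c_2/(t+1)^{\delta_2}$, $c_1,\dots,c_7 > 0$, and $0 < \delta_2 < \delta_1 < 1$. Then $\sup_{t \ge 0} |v_t| < \infty$ and $\sup_{t \ge 0} |w_t| < \infty$ for all initial conditions $v_0, w_0 \in \mathbb{R}$. -/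
set_option maxHeartbeats 800000

open Filter

theorem stmt_4 (c1 c2 c3 c4 c5 c6 c7 δ1 δ2 : ℝ)
    (hc1 : 0 < c1) (hc2 : 0 < c2) (hc3 : 0 < c3) (hc4 : 0 < c4)
    (hc5 : 0 < c5) (hc6 : 0 < c6) (hc7 : 0 < c7)
    (hδ2 : 0 < δ2) (hδ21 : δ2 < δ1) (hδ1 : δ1 < 1)
    (v w : ℕ → ℝ)
    (hrecv : ∀ t : ℕ, v (t + 1) =
      (1 - c3 * (c1 / ((t : ℝ) + 1) ^ δ1)) * v t
        + c4 * (c1 / ((t : ℝ) + 1) ^ δ1) * w t)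
    (hrecw : ∀ t : ℕ, w (t + 1) =
      (1 - c5 * (c2 / ((t : ℝ) + 1) ^ δ2) + c6 * (c1 / ((t : ℝ) + 1) ^ δ1)) * w t
        + c7 * (c1 / ((t : ℝ) + 1) ^ δ1) * v t) :
    (∃ Bv : ℝ, ∀ t : ℕ, |v t| ≤ Bv) ∧ (∃ Bw : ℝ, ∀ t : ℕ, |w t| ≤ Bw) := by
  have hδ1pos : 0 < δ1 := lt_trans hδ2 hδ21
  set K : ℝ := c4 / c3 with hK
  have hKpos : 0 < K := div_pos hc4 hc3
  set u : ℕ → ℝ := fun t => max |v t| (K * |w t|) with hu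
  have hs : ∀ t : ℕ, (0:ℝ) < (t : ℝ) + 1 := fun t => by positivity
  have hs1 : ∀ t : ℕ, (0:ℝ) < ((t : ℝ) + 1) ^ δ1 := fun t => Real.rpow_pos_of_pos (hs t) _
  have hs2 : ∀ t : ℕ, (0:ℝ) < ((t : ℝ) + 1) ^ δ2 := fun t => Real.rpow_pos_of_pos (hs t) _
  -- key step lemma
  have key : ∀ t : ℕ,
      c3 * (c1 / ((t : ℝ) + 1) ^ δ1) ≤ 1 →
      c5 * (c2 / ((t : ℝ) + 1) ^ δ2) ≤ 1 →
      (c6 + K * c7) * (c1 / ((t : ℝ) + 1) ^ δ1) ≤ c5 * (c2 / ((t : ℝ) + 1) ^ δ2) →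
      u (t + 1) ≤ u t := by
    intro t h1 h2 h3
    set p1 : ℝ := c1 / ((t : ℝ) + 1) ^ δ1 with hp1
    set p2 : ℝ := c2 / ((t : ℝ) + 1) ^ δ2 with hp2
    have hp1pos : 0 < p1 := div_pos hc1 (hs1 t)
    have hp2pos : 0 < p2 := div_pos hc2 (hs2 t)
    have ha : (0:ℝ) ≤ c3 * p1 := le_of_lt (mul_pos hc3 hp1pos)
    have hb : (0:ℝ) ≤ c5 * p2 := le_of_lt (mul_pos hc5 hp2pos)
    have hvle : |v t| ≤ u t := le_max_left _ _
    have hwle : K * |w t| ≤ u t := le_max_right _ _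
    have hupos : 0 ≤ u t := le_trans (abs_nonneg _) hvle
    have hc4p1 : c4 * p1 = K * (c3 * p1) := by
      rw [hK]; field_simp
    have hv1 : |v (t + 1)| ≤ (1 - c3 * p1) * |v t| + (c4 * p1) * |w t| := by
      rw [hrecv t]
      have habs := abs_add_le ((1 - c3 * p1) * v t) (c4 * p1 * w t)
      rw [abs_mul, abs_mul, abs_of_nonneg (show (0:ℝ) ≤ 1 - c3 * p1 by linarith),
        abs_of_nonneg (le_of_lt (mul_pos hc4 hp1pos))] at habs
      exact habs
    have hw1 : |w (t + 1)| ≤ (1 - c5 * p2 + c6 * p1) * |w t| + (c7 * p1) * |v t| := by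
      rw [hrecw t]
      have hcoef : (0:ℝ) ≤ 1 - c5 * p2 + c6 * p1 := by nlinarith [mul_pos hc6 hp1pos]
      have habs := abs_add_le ((1 - c5 * p2 + c6 * p1) * w t) (c7 * p1 * v t)
      rw [abs_mul, abs_mul, abs_of_nonneg hcoef,
        abs_of_nonneg (le_of_lt (mul_pos hc7 hp1pos))] at habs
      exact habs
    apply max_le
    · -- |v (t+1)| ≤ u t
      have h4 : (c4 * p1) * |w t| = (c3 * p1) * (K * |w t|) := by rw [hc4p1]; ring
      have h5 : (1 - c3 * p1) * |v t| ≤ (1 - c3 * p1) * u t :=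
        mul_le_mul_of_nonneg_left hvle (by linarith)
      have h6 : (c3 * p1) * (K * |w t|) ≤ (c3 * p1) * u t :=
        mul_le_mul_of_nonneg_left hwle ha
      calc |v (t + 1)| ≤ (1 - c3 * p1) * |v t| + (c4 * p1) * |w t| := hv1
        _ = (1 - c3 * p1) * |v t| + (c3 * p1) * (K * |w t|) := by rw [h4]
        _ ≤ (1 - c3 * p1) * u t + (c3 * p1) * u t := add_le_add h5 h6
        _ = u t := by ring
    · -- K * |w (t+1)| ≤ u t
      have hcoef : (0:ℝ) ≤ 1 - c5 * p2 + c6 * p1 := by nlinarith [mul_pos hc6 hp1pos]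
      have h7 : K * |w (t + 1)| ≤ (1 - c5 * p2 + c6 * p1) * (K * |w t|)
          + (K * (c7 * p1)) * |v t| := by nlinarith [hw1, hKpos.le]
      have h8 : (1 - c5 * p2 + c6 * p1) * (K * |w t|) ≤ (1 - c5 * p2 + c6 * p1) * u t :=
        mul_le_mul_of_nonneg_left hwle hcoef
      have h9 : (K * (c7 * p1)) * |v t| ≤ (K * (c7 * p1)) * u t :=
        mul_le_mul_of_nonneg_left hvle (by positivity)
      have hident : c6 * p1 + K * (c7 * p1) = (c6 + K * c7) * p1 := by ring
      have hcoef2 : (1 - c5 * p2 + c6 * p1) + K * (c7 * p1) ≤ 1 := by linarith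
      have h10 : (1 - c5 * p2 + c6 * p1) * u t + (K * (c7 * p1)) * u t ≤ u t := by
        calc (1 - c5 * p2 + c6 * p1) * u t + (K * (c7 * p1)) * u t
            = ((1 - c5 * p2 + c6 * p1) + K * (c7 * p1)) * u t := by ring
          _ ≤ 1 * u t := mul_le_mul_of_nonneg_right hcoef2 hupos
          _ = u t := one_mul _
      linarith
  -- eventual conditions
  have tendbase : Tendsto (fun t : ℕ => (t : ℝ) + 1) atTop atTop :=
    tendsto_atTop_add_const_right _ 1 tendsto_natCast_atTop_atTop
  have tend1 : Tendsto (fun t : ℕ => ((t : ℝ) + 1) ^ δ1) atTop atTop :=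
    (tendsto_rpow_atTop hδ1pos).comp tendbase
  have tend2 : Tendsto (fun t : ℕ => ((t : ℝ) + 1) ^ δ2) atTop atTop :=
    (tendsto_rpow_atTop hδ2).comp tendbase
  have tend3 : Tendsto (fun t : ℕ => ((t : ℝ) + 1) ^ (δ1 - δ2)) atTop atTop :=
    (tendsto_rpow_atTop (by linarith)).comp tendbase
  have ev1 : ∀ᶠ t : ℕ in atTop, c3 * (c1 / ((t : ℝ) + 1) ^ δ1) ≤ 1 := by
    filter_upwards [tend1.eventually_ge_atTop (c3 * c1)] with t ht
    rw [mul_div_assoc'] at *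
    exact div_le_one_of_le₀ ht (hs1 t).le
  have ev2 : ∀ᶠ t : ℕ in atTop, c5 * (c2 / ((t : ℝ) + 1) ^ δ2) ≤ 1 := by
    filter_upwards [tend2.eventually_ge_atTop (c5 * c2)] with t ht
    rw [mul_div_assoc']
    exact div_le_one_of_le₀ ht (hs2 t).le
  have ev3 : ∀ᶠ t : ℕ in atTop,
      (c6 + K * c7) * (c1 / ((t : ℝ) + 1) ^ δ1) ≤ c5 * (c2 / ((t : ℝ) + 1) ^ δ2) := by
    filter_upwards [tend3.eventually_ge_atTop ((c6 + K * c7) * c1 / (c5 * c2))] with t ht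
    have hsub : ((t : ℝ) + 1) ^ (δ1 - δ2) = ((t : ℝ) + 1) ^ δ1 / ((t : ℝ) + 1) ^ δ2 :=
      Real.rpow_sub (hs t) _ _
    rw [hsub] at ht
    rw [div_le_div_iff₀ (mul_pos hc5 hc2) (hs2 t)] at ht
    rw [mul_div_assoc', mul_div_assoc', div_le_div_iff₀ (hs1 t) (hs2 t)]
    linarith [ht, mul_comm (((t : ℝ) + 1) ^ δ1) (c5 * c2)]
  obtain ⟨T, hT⟩ := eventually_atTop.1 ((ev1.and ev2).and ev3)
  have mono : ∀ t : ℕ, T ≤ t → u (t + 1) ≤ u t := by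
    intro t ht
    obtain ⟨⟨h1, h2⟩, h3⟩ := hT t ht
    exact key t h1 h2 h3
  set M : ℝ := (Finset.range (T + 1)).sup' Finset.nonempty_range_add_one u with hM
  have hMle : ∀ t : ℕ, u t ≤ M := by
    intro t
    induction t with
    | zero => exact Finset.le_sup' u (Finset.mem_range.2 (Nat.succ_pos T))
    | succ n ih =>
      by_cases h : n + 1 ≤ T
      · exact Finset.le_sup' u (Finset.mem_range.2 (by omega))
      · exact le_trans (mono n (by omega)) ih
  refine ⟨⟨M, fun t => le_trans (le_max_left _ _) (hMle t)⟩,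
    ⟨M / K, fun t => ?_⟩⟩
  rw [le_div_iff₀ hKpos]
  calc |w t| * K = K * |w t| := by ring
    _ ≤ u t := le_max_right _ _
    _ ≤ M := hMle t
end

section
/- Consider the coupled scalar recursions $v_{t+1} = (1 - c_3 r_1(t)) v_t + c_4 r_1(t) w_t$ and $w_{t+1} = (1 - c_5 r_2(t) + c_6 r_1(t)) w_t + c_7 r_1(t) v_t$, where $r_1(t) = c_1/(t+1)^{\delta_1}$, $r_2(t) = c_2/(t+1)^{\delta_2}$, $c_1,\dots,c_7 > 0$, and $0 < \delta_2 < \delta_1 < 1$. Then $\lim_{t\to\infty} (t+1)^{\delta_0} v_t = 0$ and $\lim_{t\to\infty} (t+1)^{\delta_0} w_t = 0$ for all $0 \le \delta_0 < \delta_1 - \delta_2$ and all initial conditions $v_0, w_0 \in \mathbb{R}$. -/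
open Filter

private lemma aux_ev (c C α : ℝ) (hα : 0 < α) (hC : 0 < C) :
    ∀ᶠ t : ℕ in atTop, c * ((t : ℝ) + 1) ^ (-α) ≤ C := by
  have h1 : Tendsto (fun t : ℕ => ((t : ℝ) + 1)) atTop atTop :=
    tendsto_atTop_add_const_right _ 1 tendsto_natCast_atTop_atTop
  have h2 : Tendsto (fun t : ℕ => ((t : ℝ) + 1) ^ (-α)) atTop (nhds 0) :=
    (tendsto_rpow_neg_atTop hα).comp h1
  have h3 : Tendsto (fun t : ℕ => c * ((t : ℝ) + 1) ^ (-α)) atTop (nhds 0) := by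
    simpa using h2.const_mul c
  filter_upwards [h3.eventually (eventually_le_nhds hC)] with t ht using ht

private lemma aux_ev2 (a b α β : ℝ) (hb : 0 < b) (hβα : β < α) :
    ∀ᶠ t : ℕ in atTop, a * ((t : ℝ) + 1) ^ (-α) ≤ b * ((t : ℝ) + 1) ^ (-β) := by
  filter_upwards [aux_ev a b (α - β) (by linarith) hb] with t ht
  have hN : (0 : ℝ) < (t : ℝ) + 1 := by positivity
  have hNb : (0 : ℝ) < ((t : ℝ) + 1) ^ (-β) := Real.rpow_pos_of_pos hN _
  have e : ((t : ℝ) + 1) ^ (-α) = ((t : ℝ) + 1) ^ (-(α - β)) * ((t : ℝ) + 1) ^ (-β) := by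
    rw [← Real.rpow_add hN]; congr 1; ring
  calc a * ((t : ℝ) + 1) ^ (-α)
      = (a * ((t : ℝ) + 1) ^ (-(α - β))) * ((t : ℝ) + 1) ^ (-β) := by rw [e]; ring
    _ ≤ b * ((t : ℝ) + 1) ^ (-β) := mul_le_mul_of_nonneg_right ht hNb.le

private lemma aux_bern {p N : ℝ} (hp0 : 0 ≤ p) (hp1 : p ≤ 1) (hN : 1 ≤ N) :
    N ^ (-p) - p * N ^ (-p - 1) ≤ (N + 1) ^ (-p) := by
  have hN0 : (0 : ℝ) < N := lt_of_lt_of_le one_pos hN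
  have hN1 : (0 : ℝ) < N + 1 := by linarith
  have hpow : (0 : ℝ) < N ^ p := Real.rpow_pos_of_pos hN0 p
  have hpow1 : (0 : ℝ) < (N + 1) ^ p := Real.rpow_pos_of_pos hN1 p
  have key : (N + 1) ^ p ≤ N ^ p * (1 + p / N) := by
    have h1 : N + 1 = N * (1 + 1 / N) := by field_simp
    have h2 : (1 + 1 / N) ^ p ≤ 1 + p * (1 / N) :=
      rpow_one_add_le_one_add_mul_self (le_trans (by norm_num : (-1:ℝ) ≤ 0) (by positivity)) hp0 hp1
    calc (N + 1) ^ p = N ^ p * (1 + 1 / N) ^ p := by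
          rw [h1, Real.mul_rpow hN0.le (by positivity)]
      _ ≤ N ^ p * (1 + p * (1 / N)) := mul_le_mul_of_nonneg_left h2 hpow.le
      _ = N ^ p * (1 + p / N) := by ring
  have e1 : N ^ (-p - 1) = N ^ (-p) / N := by
    rw [show -p - 1 = -p - 1 from rfl, Real.rpow_sub hN0, Real.rpow_one]
  rw [e1, Real.rpow_neg hN0.le, Real.rpow_neg hN1.le]
  have main : ((N ^ p)⁻¹ - p * ((N ^ p)⁻¹ / N)) * (N + 1) ^ p ≤ 1 := by
    have efac : (N ^ p)⁻¹ - p * ((N ^ p)⁻¹ / N) = (N ^ p)⁻¹ * (1 - p / N) := by ring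
    rcases le_or_gt (1 - p / N) 0 with h | h
    · have h0 : (N ^ p)⁻¹ - p * ((N ^ p)⁻¹ / N) ≤ 0 := by
        rw [efac]
        exact mul_nonpos_of_nonneg_of_nonpos (by positivity) h
      nlinarith
    · have hfac : 0 ≤ (N ^ p)⁻¹ - p * ((N ^ p)⁻¹ / N) := by
        rw [efac]; positivity
      calc ((N ^ p)⁻¹ - p * ((N ^ p)⁻¹ / N)) * (N + 1) ^ p
          ≤ ((N ^ p)⁻¹ - p * ((N ^ p)⁻¹ / N)) * (N ^ p * (1 + p / N)) :=
            mul_le_mul_of_nonneg_left key hfac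
        _ = (1 - p / N) * (1 + p / N) := by field_simp
        _ = 1 - (p / N) ^ 2 := by ring
        _ ≤ 1 := by nlinarith [sq_nonneg (p / N)]
  calc (N ^ p)⁻¹ - p * ((N ^ p)⁻¹ / N)
      = (((N ^ p)⁻¹ - p * ((N ^ p)⁻¹ / N)) * (N + 1) ^ p) / (N + 1) ^ p := by
        rw [mul_div_cancel_right₀ _ hpow1.ne']
    _ ≤ 1 / (N + 1) ^ p := by gcongr
    _ = ((N + 1) ^ p)⁻¹ := one_div _

theorem stmt_5 (c1 c2 c3 c4 c5 c6 c7 δ1 δ2 : ℝ)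
    (hc1 : 0 < c1) (hc2 : 0 < c2) (hc3 : 0 < c3) (hc4 : 0 < c4)
    (hc5 : 0 < c5) (hc6 : 0 < c6) (hc7 : 0 < c7)
    (hδ2 : 0 < δ2) (hδ21 : δ2 < δ1) (hδ1 : δ1 < 1)
    (v w : ℕ → ℝ)
    (hrecv : ∀ t : ℕ, v (t + 1) =
      (1 - c3 * (c1 / ((t : ℝ) + 1) ^ δ1)) * v t
        + c4 * (c1 / ((t : ℝ) + 1) ^ δ1) * w t)
    (hrecw : ∀ t : ℕ, w (t + 1) =
      (1 - c5 * (c2 / ((t : ℝ) + 1) ^ δ2) + c6 * (c1 / ((t : ℝ) + 1) ^ δ1)) * w t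
        + c7 * (c1 / ((t : ℝ) + 1) ^ δ1) * v t)
    (δ0 : ℝ) (hδ0 : 0 ≤ δ0) (hδ0' : δ0 < δ1 - δ2) :
    Tendsto (fun t : ℕ => ((t : ℝ) + 1) ^ δ0 * v t) atTop (nhds 0) ∧
    Tendsto (fun t : ℕ => ((t : ℝ) + 1) ^ δ0 * w t) atTop (nhds 0) := by
  have hδd : 0 < δ1 - δ2 := by linarith
  set δ : ℝ := (δ0 + (δ1 - δ2)) / 2 with hδdef
  have hδpos : 0 < δ := by rw [hδdef]; linarith
  have hδ0δ : δ0 < δ := by rw [hδdef]; linarith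
  have hδδ : δ < δ1 - δ2 := by rw [hδdef]; linarith
  have hδlt1 : δ < 1 := by linarith
  set ε : ℝ := min (δ1 - δ2) (1 - δ) / 2 with hεdef
  have hεpos : 0 < ε := by
    have h := lt_min hδd (show (0 : ℝ) < 1 - δ by linarith)
    rw [hεdef]; linarith
  have hε1 : ε ≤ (δ1 - δ2) / 2 := by
    have := min_le_left (δ1 - δ2) (1 - δ); rw [hεdef]; linarith
  have hε2 : ε ≤ (1 - δ) / 2 := by
    have := min_le_right (δ1 - δ2) (1 - δ); rw [hεdef]; linarith
  set δ' : ℝ := δ + ε with hδ'def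
  have hδ'pos : 0 < δ' := by rw [hδ'def]; linarith
  have hδ'1 : δ' ≤ 1 := by rw [hδ'def]; linarith
  have hδ'le : δ2 + δ' ≤ δ1 + δ := by rw [hδ'def]; linarith
  have hδδ' : δ ≤ δ' := by rw [hδ'def]; linarith
  set K : ℝ := 4 * c7 * c1 / (c5 * c2) with hKdef
  have hK : 0 < K := by rw [hKdef]; positivity
  have hKeq : c5 / 2 * c2 * K = 2 * c7 * c1 := by rw [hKdef]; field_simp; ring
  -- eventual conditions
  have Hev : ∀ᶠ t : ℕ in atTop,
      (c3 * c1) * ((t : ℝ) + 1) ^ (-δ1) ≤ 1 ∧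
      (c6 * c1) * ((t : ℝ) + 1) ^ (-δ1) ≤ (c5 / 2 * c2) * ((t : ℝ) + 1) ^ (-δ2) ∧
      (c5 * c2) * ((t : ℝ) + 1) ^ (-δ2) ≤ 1 ∧
      δ * ((t : ℝ) + 1) ^ (-(1 - δ1)) + (c4 * K * c1) * ((t : ℝ) + 1) ^ (-ε) ≤ c3 * c1 ∧
      (K * δ') * ((t : ℝ) + 1) ^ (-(1 - δ2)) ≤ c7 * c1 := by
    have e1 := aux_ev (c3 * c1) 1 δ1 (by linarith) one_pos
    have e2 := aux_ev2 (c6 * c1) (c5 / 2 * c2) δ1 δ2 (by positivity) hδ21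
    have e3 := aux_ev (c5 * c2) 1 δ2 hδ2 one_pos
    have e4a := aux_ev δ (c3 * c1 / 2) (1 - δ1) (by linarith) (by positivity)
    have e4b := aux_ev (c4 * K * c1) (c3 * c1 / 2) ε hεpos (by positivity)
    have e5 := aux_ev (K * δ') (c7 * c1) (1 - δ2) (by linarith) (by positivity)
    filter_upwards [e1, e2, e3, e4a, e4b, e5] with t h1 h2 h3 h4a h4b h5
    exact ⟨h1, h2, h3, by linarith, h5⟩
  obtain ⟨T, hT⟩ := eventually_atTop.mp Hev
  set M : ℝ := max (|v T| * ((T : ℝ) + 1) ^ δ) (|w T| * ((T : ℝ) + 1) ^ δ' / K) with hMdef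
  have hM0 : 0 ≤ M := le_trans (by positivity) (le_max_left _ _)
  have hT0 : (0 : ℝ) < (T : ℝ) + 1 := by positivity
  have hcancel : ∀ p : ℝ, ((T : ℝ) + 1) ^ p * ((T : ℝ) + 1) ^ (-p) = 1 := by
    intro p; rw [← Real.rpow_add hT0]; simp
  have basev : |v T| ≤ M * ((T : ℝ) + 1) ^ (-δ) := by
    calc |v T| = (|v T| * ((T : ℝ) + 1) ^ δ) * ((T : ℝ) + 1) ^ (-δ) := by
          rw [mul_assoc, hcancel, mul_one]
      _ ≤ M * ((T : ℝ) + 1) ^ (-δ) :=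
          mul_le_mul_of_nonneg_right (le_max_left _ _) (Real.rpow_nonneg hT0.le _)
  have basew : |w T| ≤ M * K * ((T : ℝ) + 1) ^ (-δ') := by
    have h1 : |w T| * ((T : ℝ) + 1) ^ δ' / K ≤ M := le_max_right _ _
    have h2 : |w T| * ((T : ℝ) + 1) ^ δ' ≤ M * K := by
      rw [div_le_iff₀ hK] at h1; exact h1
    calc |w T| = (|w T| * ((T : ℝ) + 1) ^ δ') * ((T : ℝ) + 1) ^ (-δ') := by
          rw [mul_assoc, hcancel, mul_one]
      _ ≤ M * K * ((T : ℝ) + 1) ^ (-δ') :=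
          mul_le_mul_of_nonneg_right h2 (Real.rpow_nonneg hT0.le _)
  have main : ∀ t, T ≤ t →
      |v t| ≤ M * ((t : ℝ) + 1) ^ (-δ) ∧ |w t| ≤ M * K * ((t : ℝ) + 1) ^ (-δ') := by
    intro t ht
    induction t, ht using Nat.le_induction with
    | base => exact ⟨basev, basew⟩
    | succ t ht ih =>
      obtain ⟨ihv, ihw⟩ := ih
      obtain ⟨H1, H2, H3, H4, H5⟩ := hT t ht
      have hv := hrecv t
      have hw := hrecw t
      set N : ℝ := (t : ℝ) + 1 with hNdef
      have hN1 : (1 : ℝ) ≤ N := by rw [hNdef]; exact le_add_of_nonneg_left (Nat.cast_nonneg t)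
      have hN0 : (0 : ℝ) < N := lt_of_lt_of_le one_pos hN1
      have hdiv1 : c1 / N ^ δ1 = c1 * N ^ (-δ1) := by
        rw [Real.rpow_neg hN0.le]; ring
      have hdiv2 : c2 / N ^ δ2 = c2 * N ^ (-δ2) := by
        rw [Real.rpow_neg hN0.le]; ring
      rw [hdiv1] at hv hw
      rw [hdiv2] at hw
      have hr1 : (0 : ℝ) ≤ c1 * N ^ (-δ1) := by positivity
      have hr2 : (0 : ℝ) ≤ c2 * N ^ (-δ2) := by positivity
      have H1' : c3 * (c1 * N ^ (-δ1)) ≤ 1 := by rw [← mul_assoc]; exact H1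
      have H2' : c6 * (c1 * N ^ (-δ1)) ≤ c5 / 2 * (c2 * N ^ (-δ2)) := by
        rw [← mul_assoc, ← mul_assoc]; exact H2
      have H3' : c5 * (c2 * N ^ (-δ2)) ≤ 1 := by rw [← mul_assoc]; exact H3
      have hco1 : (0 : ℝ) ≤ 1 - c3 * (c1 * N ^ (-δ1)) := by linarith
      have hcast : ((t + 1 : ℕ) : ℝ) + 1 = N + 1 := by push_cast; rw [← hNdef]
      -- exponent identities
      have E1 : N ^ (-(1 - δ1)) * N ^ (-δ1 - δ) = N ^ (-δ - 1) := by
        rw [← Real.rpow_add hN0]; all_goals (congr 1 <;> ring)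
      have E2 : N ^ (-ε) * N ^ (-δ1 - δ) = N ^ (-δ1) * N ^ (-δ') := by
        rw [← Real.rpow_add hN0, ← Real.rpow_add hN0]; congr 1; rw [hδ'def]; ring
      have E3 : N ^ (-δ1) * N ^ (-δ) = N ^ (-δ1 - δ) := by
        rw [← Real.rpow_add hN0]; all_goals (congr 1 <;> ring)
      have E4 : N ^ (-(1 - δ2)) * N ^ (-δ2 - δ') = N ^ (-δ' - 1) := by
        rw [← Real.rpow_add hN0]; all_goals (congr 1 <;> ring)
      have E5 : N ^ (-δ2) * N ^ (-δ') = N ^ (-δ2 - δ') := by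
        rw [← Real.rpow_add hN0]; all_goals (congr 1 <;> ring)
      have E6 : N ^ (-δ1) * N ^ (-δ) ≤ N ^ (-δ2 - δ') := by
        rw [E3]; exact Real.rpow_le_rpow_of_exponent_le hN1 (by linarith)
      constructor
      · -- bound for v (t+1)
        have hbv : |v (t + 1)| ≤ (1 - c3 * (c1 * N ^ (-δ1))) * |v t|
            + c4 * (c1 * N ^ (-δ1)) * |w t| := by
          rw [hv]
          calc |(1 - c3 * (c1 * N ^ (-δ1))) * v t + c4 * (c1 * N ^ (-δ1)) * w t|
              ≤ |(1 - c3 * (c1 * N ^ (-δ1))) * v t| + |c4 * (c1 * N ^ (-δ1)) * w t| :=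
                abs_add_le _ _
            _ = (1 - c3 * (c1 * N ^ (-δ1))) * |v t| + c4 * (c1 * N ^ (-δ1)) * |w t| := by
                rw [abs_mul, abs_mul, abs_of_nonneg hco1,
                  abs_of_nonneg (by positivity : (0:ℝ) ≤ c4 * (c1 * N ^ (-δ1)))]
        have hv' : |v (t + 1)| ≤ (1 - c3 * (c1 * N ^ (-δ1))) * (M * N ^ (-δ))
            + c4 * (c1 * N ^ (-δ1)) * (M * K * N ^ (-δ')) := by
          refine le_trans hbv (add_le_add ?_ ?_)
          · exact mul_le_mul_of_nonneg_left ihv hco1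
          · exact mul_le_mul_of_nonneg_left ihw (by positivity)
        have hb : N ^ (-δ) - δ * N ^ (-δ - 1) ≤ (N + 1) ^ (-δ) :=
          aux_bern hδpos.le hδlt1.le hN1
        have h4 := mul_le_mul_of_nonneg_right H4 (Real.rpow_nonneg hN0.le (-δ1 - δ))
        have h4' : δ * N ^ (-δ - 1) + c4 * K * c1 * (N ^ (-δ1) * N ^ (-δ'))
            ≤ c3 * c1 * (N ^ (-δ1) * N ^ (-δ)) := by
          rw [E3]
          calc δ * N ^ (-δ - 1) + c4 * K * c1 * (N ^ (-δ1) * N ^ (-δ'))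
              = (δ * N ^ (-(1 - δ1)) + c4 * K * c1 * N ^ (-ε)) * N ^ (-δ1 - δ) := by
                rw [← E1, ← E2]; ring
            _ ≤ c3 * c1 * N ^ (-δ1 - δ) := h4
        have hs : N ^ (-δ) - c3 * c1 * (N ^ (-δ1) * N ^ (-δ))
            + c4 * K * c1 * (N ^ (-δ1) * N ^ (-δ')) ≤ (N + 1) ^ (-δ) := by linarith
        calc |v (t + 1)| ≤ (1 - c3 * (c1 * N ^ (-δ1))) * (M * N ^ (-δ))
              + c4 * (c1 * N ^ (-δ1)) * (M * K * N ^ (-δ')) := hv'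
          _ = M * (N ^ (-δ) - c3 * c1 * (N ^ (-δ1) * N ^ (-δ))
              + c4 * K * c1 * (N ^ (-δ1) * N ^ (-δ'))) := by ring
          _ ≤ M * (N + 1) ^ (-δ) := mul_le_mul_of_nonneg_left hs hM0
          _ = M * (((t + 1 : ℕ) : ℝ) + 1) ^ (-δ) := by rw [hcast]
      · -- bound for w (t+1)
        have hp5 : (0 : ℝ) ≤ c5 * (c2 * N ^ (-δ2)) := by positivity
        have hco2a : (0 : ℝ) ≤ 1 - c5 * (c2 * N ^ (-δ2)) + c6 * (c1 * N ^ (-δ1)) := by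
          have : (0 : ℝ) ≤ c6 * (c1 * N ^ (-δ1)) := by positivity
          linarith
        have hco2b : 1 - c5 * (c2 * N ^ (-δ2)) + c6 * (c1 * N ^ (-δ1))
            ≤ 1 - c5 / 2 * (c2 * N ^ (-δ2)) := by linarith
        have habs2 : |1 - c5 * (c2 * N ^ (-δ2)) + c6 * (c1 * N ^ (-δ1))|
            ≤ 1 - c5 / 2 * (c2 * N ^ (-δ2)) := by
          rw [abs_le]; constructor
          · linarith
          · exact hco2b
        have hbw : |w (t + 1)| ≤ (1 - c5 / 2 * (c2 * N ^ (-δ2))) * |w t|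
            + c7 * (c1 * N ^ (-δ1)) * |v t| := by
          rw [hw]
          calc |(1 - c5 * (c2 * N ^ (-δ2)) + c6 * (c1 * N ^ (-δ1))) * w t
                + c7 * (c1 * N ^ (-δ1)) * v t|
              ≤ |(1 - c5 * (c2 * N ^ (-δ2)) + c6 * (c1 * N ^ (-δ1))) * w t|
                + |c7 * (c1 * N ^ (-δ1)) * v t| := abs_add_le _ _
            _ = |1 - c5 * (c2 * N ^ (-δ2)) + c6 * (c1 * N ^ (-δ1))| * |w t|
                + c7 * (c1 * N ^ (-δ1)) * |v t| := by
                rw [abs_mul, abs_mul,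
                  abs_of_nonneg (by positivity : (0:ℝ) ≤ c7 * (c1 * N ^ (-δ1)))]
            _ ≤ (1 - c5 / 2 * (c2 * N ^ (-δ2))) * |w t|
                + c7 * (c1 * N ^ (-δ1)) * |v t| := by
                have := mul_le_mul_of_nonneg_right habs2 (abs_nonneg (w t))
                linarith
        have hq : (0 : ℝ) ≤ 1 - c5 / 2 * (c2 * N ^ (-δ2)) := by linarith
        have hw' : |w (t + 1)| ≤ (1 - c5 / 2 * (c2 * N ^ (-δ2))) * (M * K * N ^ (-δ'))
            + c7 * (c1 * N ^ (-δ1)) * (M * N ^ (-δ)) := by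
          refine le_trans hbw (add_le_add ?_ ?_)
          · exact mul_le_mul_of_nonneg_left ihw hq
          · exact mul_le_mul_of_nonneg_left ihv (by positivity)
        have hb' : N ^ (-δ') - δ' * N ^ (-δ' - 1) ≤ (N + 1) ^ (-δ') :=
          aux_bern hδ'pos.le hδ'1 hN1
        have h5 := mul_le_mul_of_nonneg_right H5 (Real.rpow_nonneg hN0.le (-δ2 - δ'))
        have t1 : K * δ' * N ^ (-δ' - 1) ≤ c7 * c1 * N ^ (-δ2 - δ') := by
          calc K * δ' * N ^ (-δ' - 1)
              = K * δ' * N ^ (-(1 - δ2)) * N ^ (-δ2 - δ') := by rw [← E4]; ring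
            _ ≤ c7 * c1 * N ^ (-δ2 - δ') := h5
        have t2 : c7 * c1 * (N ^ (-δ1) * N ^ (-δ)) ≤ c7 * c1 * N ^ (-δ2 - δ') :=
          mul_le_mul_of_nonneg_left E6 (by positivity)
        have hs2 : K * N ^ (-δ') - c5 / 2 * c2 * K * (N ^ (-δ2) * N ^ (-δ'))
            + c7 * c1 * (N ^ (-δ1) * N ^ (-δ)) ≤ K * ((N + 1) ^ (-δ')) := by
          calc K * N ^ (-δ') - c5 / 2 * c2 * K * (N ^ (-δ2) * N ^ (-δ'))
                + c7 * c1 * (N ^ (-δ1) * N ^ (-δ))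
              = K * N ^ (-δ') - 2 * c7 * c1 * N ^ (-δ2 - δ')
                + c7 * c1 * (N ^ (-δ1) * N ^ (-δ)) := by rw [E5, hKeq]
            _ ≤ K * N ^ (-δ') - K * δ' * N ^ (-δ' - 1) := by linarith
            _ = K * (N ^ (-δ') - δ' * N ^ (-δ' - 1)) := by ring
            _ ≤ K * ((N + 1) ^ (-δ')) := mul_le_mul_of_nonneg_left hb' hK.le
        calc |w (t + 1)| ≤ (1 - c5 / 2 * (c2 * N ^ (-δ2))) * (M * K * N ^ (-δ'))
              + c7 * (c1 * N ^ (-δ1)) * (M * N ^ (-δ)) := hw'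
          _ = M * (K * N ^ (-δ') - c5 / 2 * c2 * K * (N ^ (-δ2) * N ^ (-δ'))
              + c7 * c1 * (N ^ (-δ1) * N ^ (-δ))) := by ring
          _ ≤ M * (K * ((N + 1) ^ (-δ'))) := mul_le_mul_of_nonneg_left hs2 hM0
          _ = M * K * (((t + 1 : ℕ) : ℝ) + 1) ^ (-δ') := by rw [hcast]; ring
  -- conclude
  have h1 : Tendsto (fun t : ℕ => ((t : ℝ) + 1)) atTop atTop :=
    tendsto_atTop_add_const_right _ 1 tendsto_natCast_atTop_atTop
  have htend : Tendsto (fun t : ℕ => ((t : ℝ) + 1) ^ (δ0 - δ)) atTop (nhds 0) := by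
    have h2 := (tendsto_rpow_neg_atTop (show (0:ℝ) < δ - δ0 by linarith)).comp h1
    have heq : (fun t : ℕ => ((t : ℝ) + 1) ^ (-(δ - δ0)))
        = fun t : ℕ => ((t : ℝ) + 1) ^ (δ0 - δ) := by
      funext t; congr 1; ring
    rw [← heq]; exact h2
  constructor
  · apply squeeze_zero_norm' (a := fun t : ℕ => M * ((t : ℝ) + 1) ^ (δ0 - δ))
    · filter_upwards [eventually_ge_atTop T] with t ht
      have hN0 : (0 : ℝ) < (t : ℝ) + 1 := by positivity
      have h := (main t ht).1
      have e : ((t : ℝ) + 1) ^ δ0 * ((t : ℝ) + 1) ^ (-δ) = ((t : ℝ) + 1) ^ (δ0 - δ) := by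
        rw [← Real.rpow_add hN0]; all_goals (congr 1 <;> ring)
      calc ‖((t : ℝ) + 1) ^ δ0 * v t‖ = ((t : ℝ) + 1) ^ δ0 * |v t| := by
            rw [Real.norm_eq_abs, abs_mul,
              abs_of_nonneg (Real.rpow_nonneg hN0.le _)]
        _ ≤ ((t : ℝ) + 1) ^ δ0 * (M * ((t : ℝ) + 1) ^ (-δ)) :=
            mul_le_mul_of_nonneg_left h (Real.rpow_nonneg hN0.le _)
        _ = M * (((t : ℝ) + 1) ^ δ0 * ((t : ℝ) + 1) ^ (-δ)) := by ring
        _ = M * ((t : ℝ) + 1) ^ (δ0 - δ) := by rw [e]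
    · simpa using htend.const_mul M
  · apply squeeze_zero_norm' (a := fun t : ℕ => M * K * ((t : ℝ) + 1) ^ (δ0 - δ))
    · filter_upwards [eventually_ge_atTop T] with t ht
      have hN1 : (1 : ℝ) ≤ (t : ℝ) + 1 := le_add_of_nonneg_left (Nat.cast_nonneg t)
      have hN0 : (0 : ℝ) < (t : ℝ) + 1 := lt_of_lt_of_le one_pos hN1
      have h := (main t ht).2
      have h' : |w t| ≤ M * K * ((t : ℝ) + 1) ^ (-δ) := by
        refine le_trans h (mul_le_mul_of_nonneg_left ?_ (by positivity))
        exact Real.rpow_le_rpow_of_exponent_le hN1 (by linarith)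
      have e : ((t : ℝ) + 1) ^ δ0 * ((t : ℝ) + 1) ^ (-δ) = ((t : ℝ) + 1) ^ (δ0 - δ) := by
        rw [← Real.rpow_add hN0]; all_goals (congr 1 <;> ring)
      calc ‖((t : ℝ) + 1) ^ δ0 * w t‖ = ((t : ℝ) + 1) ^ δ0 * |w t| := by
            rw [Real.norm_eq_abs, abs_mul,
              abs_of_nonneg (Real.rpow_nonneg hN0.le _)]
        _ ≤ ((t : ℝ) + 1) ^ δ0 * (M * K * ((t : ℝ) + 1) ^ (-δ)) :=
            mul_le_mul_of_nonneg_left h' (Real.rpow_nonneg hN0.le _)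
        _ = M * K * (((t : ℝ) + 1) ^ δ0 * ((t : ℝ) + 1) ^ (-δ)) := by ring
        _ = M * K * ((t : ℝ) + 1) ^ (δ0 - δ) := by rw [e]
    · simpa using htend.const_mul (M * K)
end

section
/- Consider the coupled recursions $\gamma_{1,t+1} = (1 - \beta_t \lambda_2 + \kappa_1 \alpha_t)\gamma_{1,t} + \kappa_2 \alpha_t \gamma_{2,t}$ and $\gamma_{2,t+1} = \alpha_t \gamma_{1,t} + (1 - \alpha_t(1-2s))\gamma_{2,t}$, where $\alpha_t = a/(t+1)^{\tau_1}$, $\beta_t = b/(t+1)^{\tau_2}$, $a, b, \lambda_2, \kappa_1, \kappa_2 > 0$, $0 < s < 1/2$, and $0 < \tau_2 < \tau_1 < 1$, with initial conditions $\gamma_{1,0} = 0$ and $\gamma_{2,0} = \eta > 0$. Then $\lim_{t\to\infty} (t+1)^{\tau_0} \gamma_{i,t} = 0$ for $i = 1, 2$ and all $0 \le \tau_0 < \tau_1 - \tau_2$. -/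
open Filter

set_option maxHeartbeats 1000000

private lemma aux_decay_14 (p θ δ : ℝ) (hθ : 0 < θ) (hδ : 0 < δ) :
    Tendsto (fun n : ℕ => ((n : ℝ) + 1) ^ p * Real.exp (-δ * ((n : ℝ) + 1) ^ θ))
      atTop (nhds 0) := by
  have hnat : Tendsto (fun n : ℕ => ((n : ℝ) + 1)) atTop atTop :=
    tendsto_atTop_add_const_right _ 1 tendsto_natCast_atTop_atTop
  have h1 : Tendsto (fun n : ℕ => ((n : ℝ) + 1) ^ θ) atTop atTop :=
    (tendsto_rpow_atTop hθ).comp hnat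
  have h2 := (tendsto_rpow_mul_exp_neg_mul_atTop_nhds_zero (p / θ) δ hδ).comp h1
  refine h2.congr fun n => ?_
  have hx : (0 : ℝ) ≤ (n : ℝ) + 1 := by positivity
  have hθp : θ * (p / θ) = p := by field_simp
  simp only [Function.comp]
  rw [← Real.rpow_mul hx, hθp]

theorem stmt_14 (a b lam2 κ1 κ2 s η τ1 τ2 : ℝ)
    (ha : 0 < a) (hb : 0 < b) (hlam2 : 0 < lam2) (hκ1 : 0 < κ1) (hκ2 : 0 < κ2)
    (hs : 0 < s) (hs' : s < 1 / 2) (hη : 0 < η)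
    (hτ2 : 0 < τ2) (hτ21 : τ2 < τ1) (hτ1 : τ1 < 1)
    (γ1 γ2 : ℕ → ℝ)
    (h10 : γ1 0 = 0) (h20 : γ2 0 = η)
    (hrec1 : ∀ t : ℕ, γ1 (t + 1) =
      (1 - (b / ((t : ℝ) + 1) ^ τ2) * lam2 + κ1 * (a / ((t : ℝ) + 1) ^ τ1)) * γ1 t
        + κ2 * (a / ((t : ℝ) + 1) ^ τ1) * γ2 t)
    (hrec2 : ∀ t : ℕ, γ2 (t + 1) =
      (a / ((t : ℝ) + 1) ^ τ1) * γ1 t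
        + (1 - (a / ((t : ℝ) + 1) ^ τ1) * (1 - 2 * s)) * γ2 t)
    (τ0 : ℝ) (hτ0 : 0 ≤ τ0) (hτ0' : τ0 < τ1 - τ2) :
    Tendsto (fun t : ℕ => ((t : ℝ) + 1) ^ τ0 * γ1 t) atTop (nhds 0) ∧
    Tendsto (fun t : ℕ => ((t : ℝ) + 1) ^ τ0 * γ2 t) atTop (nhds 0) := by
  -- notation
  set α : ℕ → ℝ := fun t => a / ((t : ℝ) + 1) ^ τ1 with hα_def
  set βf : ℕ → ℝ := fun t => b / ((t : ℝ) + 1) ^ τ2 with hβ_def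
  have hbase : ∀ t : ℕ, (0 : ℝ) < (t : ℝ) + 1 := fun t => by positivity
  have hαpos : ∀ t, 0 < α t := fun t => div_pos ha (Real.rpow_pos_of_pos (hbase t) _)
  have hβpos : ∀ t, 0 < βf t := fun t => div_pos hb (Real.rpow_pos_of_pos (hbase t) _)
  have hs2 : 0 < 1 - 2 * s := by linarith
  set ε : ℝ := (1 - 2 * s) / (2 * κ2) with hε_def
  set c : ℝ := (1 - 2 * s) / 2 with hc_def
  have hε : 0 < ε := by positivity
  have hc : 0 < c := by positivity
  have hc1 : c ≤ 1 := by rw [hc_def]; linarith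
  have hεκ2 : ε * κ2 = c := by rw [hε_def, hc_def]; field_simp
  set W : ℕ → ℝ := fun t => ε * |γ1 t| + |γ2 t| with hW_def
  have hWnn : ∀ t, 0 ≤ W t := fun t => by positivity
  have hnat : Tendsto (fun t : ℕ => ((t : ℝ) + 1)) atTop atTop :=
    tendsto_atTop_add_const_right _ 1 tendsto_natCast_atTop_atTop
  -- α → 0, β → 0, α/β → 0
  have hαto : Tendsto α atTop (nhds 0) := by
    have h1 : Tendsto (fun t : ℕ => (((t : ℝ) + 1) ^ τ1)⁻¹) atTop (nhds 0) :=
      ((tendsto_rpow_atTop (by linarith : (0:ℝ) < τ1)).comp hnat).inv_tendsto_atTop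
    have := h1.const_mul a
    simpa [hα_def, div_eq_mul_inv] using this
  have hβto : Tendsto βf atTop (nhds 0) := by
    have h1 : Tendsto (fun t : ℕ => (((t : ℝ) + 1) ^ τ2)⁻¹) atTop (nhds 0) :=
      ((tendsto_rpow_atTop hτ2).comp hnat).inv_tendsto_atTop
    have := h1.const_mul b
    simpa [hβ_def, div_eq_mul_inv] using this
  have hratio : Tendsto (fun t : ℕ => α t / βf t) atTop (nhds 0) := by
    have heq : ∀ t : ℕ, α t / βf t = (a / b) * (((t : ℝ) + 1) ^ (τ1 - τ2))⁻¹ := by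
      intro t
      have hx := hbase t
      have hp1 : (0:ℝ) < ((t : ℝ) + 1) ^ τ1 := Real.rpow_pos_of_pos hx _
      have hp2 : (0:ℝ) < ((t : ℝ) + 1) ^ τ2 := Real.rpow_pos_of_pos hx _
      rw [hα_def, hβ_def]
      simp only
      rw [Real.rpow_sub hx]
      field_simp
    have h1 : Tendsto (fun t : ℕ => (((t : ℝ) + 1) ^ (τ1 - τ2))⁻¹) atTop (nhds 0) :=
      ((tendsto_rpow_atTop (by linarith : (0:ℝ) < τ1 - τ2)).comp hnat).inv_tendsto_atTop
    have := h1.const_mul (a / b)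
    rw [mul_zero] at this
    exact this.congr fun t => (heq t).symm
  -- eventually conditions
  have hev : ∀ᶠ t in atTop, βf t * lam2 ≤ 1 ∧ α t * (1 - 2 * s) ≤ 1 ∧
      κ1 * α t ≤ βf t * lam2 / 2 ∧ α t * (1 + ε) ≤ ε * (βf t * lam2) / 2 := by
    have e1 : ∀ᶠ t in atTop, βf t * lam2 ≤ 1 := by
      have h := hβto.const_mul lam2
      rw [mul_zero] at h
      have := h.eventually (eventually_le_nhds one_pos)
      filter_upwards [this] with t ht
      rw [mul_comm]
      exact ht
    have e2 : ∀ᶠ t in atTop, α t * (1 - 2 * s) ≤ 1 := by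
      have h := hαto.const_mul (1 - 2 * s)
      rw [mul_zero] at h
      have := h.eventually (eventually_le_nhds one_pos)
      filter_upwards [this] with t ht
      rw [mul_comm]
      exact ht
    have e3 : ∀ᶠ t in atTop, κ1 * α t ≤ βf t * lam2 / 2 := by
      have hK : (0:ℝ) < lam2 / (2 * κ1) := by positivity
      have := hratio.eventually (eventually_le_nhds hK)
      filter_upwards [this] with t ht
      have h2 : α t ≤ lam2 / (2 * κ1) * βf t :=
        (div_le_iff₀ (hβpos t)).mp ht
      calc κ1 * α t ≤ κ1 * (lam2 / (2 * κ1) * βf t) :=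
            mul_le_mul_of_nonneg_left h2 hκ1.le
        _ = βf t * lam2 / 2 := by field_simp
    have e4 : ∀ᶠ t in atTop, α t * (1 + ε) ≤ ε * (βf t * lam2) / 2 := by
      have hK : (0:ℝ) < ε * lam2 / (2 * (1 + ε)) := by positivity
      have := hratio.eventually (eventually_le_nhds hK)
      filter_upwards [this] with t ht
      have h2 : α t ≤ ε * lam2 / (2 * (1 + ε)) * βf t :=
        (div_le_iff₀ (hβpos t)).mp ht
      calc α t * (1 + ε) ≤ ε * lam2 / (2 * (1 + ε)) * βf t * (1 + ε) :=
            mul_le_mul_of_nonneg_right h2 (by positivity)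
        _ = ε * (βf t * lam2) / 2 := by field_simp
    filter_upwards [e1, e2, e3, e4] with t h1 h2 h3 h4
    exact ⟨h1, h2, h3, h4⟩
  obtain ⟨T, hT⟩ := eventually_atTop.mp hev
  -- contraction of W
  have hcontr : ∀ t, T ≤ t → W (t + 1) ≤ (1 - c * α t) * W t := by
    intro t ht
    obtain ⟨hb1, hα1, hκα, hαε⟩ := hT t ht
    have hA : 0 ≤ 1 - βf t * lam2 + κ1 * α t := by
      nlinarith [mul_pos hκ1 (hαpos t)]
    have hB : 0 ≤ 1 - α t * (1 - 2 * s) := by linarith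
    have h1 : |γ1 (t + 1)| ≤ (1 - βf t * lam2 + κ1 * α t) * |γ1 t| + κ2 * α t * |γ2 t| := by
      calc |γ1 (t + 1)| = |(1 - βf t * lam2 + κ1 * α t) * γ1 t + κ2 * α t * γ2 t| := by
            rw [hrec1 t]
        _ ≤ |(1 - βf t * lam2 + κ1 * α t) * γ1 t| + |κ2 * α t * γ2 t| := abs_add_le _ _
        _ = (1 - βf t * lam2 + κ1 * α t) * |γ1 t| + κ2 * α t * |γ2 t| := by
            rw [abs_mul, abs_mul, abs_of_nonneg hA,
              abs_of_nonneg (by positivity : (0:ℝ) ≤ κ2 * α t)]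
    have h2 : |γ2 (t + 1)| ≤ α t * |γ1 t| + (1 - α t * (1 - 2 * s)) * |γ2 t| := by
      calc |γ2 (t + 1)| = |α t * γ1 t + (1 - α t * (1 - 2 * s)) * γ2 t| := by rw [hrec2 t]
        _ ≤ |α t * γ1 t| + |(1 - α t * (1 - 2 * s)) * γ2 t| := abs_add_le _ _
        _ = α t * |γ1 t| + (1 - α t * (1 - 2 * s)) * |γ2 t| := by
            rw [abs_mul, abs_mul, abs_of_nonneg (hαpos t).le, abs_of_nonneg hB]
    have hu : 0 ≤ |γ1 t| := abs_nonneg _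
    have hv : 0 ≤ |γ2 t| := abs_nonneg _
    have hαt := (hαpos t).le
    have h1' := mul_le_mul_of_nonneg_left h1 hε.le
    have key_u : ε * (1 - βf t * lam2 + κ1 * α t) + α t ≤ ε * (1 - c * α t) := by
      nlinarith [mul_le_mul_of_nonneg_left hκα hε.le, hαε,
        mul_nonneg (mul_nonneg hε.le hαt) (by linarith : (0:ℝ) ≤ 1 - c)]
    have h2s : (1:ℝ) - 2 * s = 2 * c := by rw [hc_def]; ring
    have key_v : ε * (κ2 * α t) + (1 - α t * (1 - 2 * s)) = 1 - c * α t := by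
      linear_combination (α t) * hεκ2 - (α t) * h2s
    rw [hW_def]
    simp only
    calc ε * |γ1 (t + 1)| + |γ2 (t + 1)|
        ≤ ε * ((1 - βf t * lam2 + κ1 * α t) * |γ1 t| + κ2 * α t * |γ2 t|)
            + (α t * |γ1 t| + (1 - α t * (1 - 2 * s)) * |γ2 t|) := add_le_add h1' h2
      _ = (ε * (1 - βf t * lam2 + κ1 * α t) + α t) * |γ1 t|
            + (ε * (κ2 * α t) + (1 - α t * (1 - 2 * s))) * |γ2 t| := by ring
      _ ≤ ε * (1 - c * α t) * |γ1 t| + (1 - c * α t) * |γ2 t| := by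
            rw [key_v]
            exact add_le_add (mul_le_mul_of_nonneg_right key_u hu) le_rfl
      _ = (1 - c * α t) * (ε * |γ1 t| + |γ2 t|) := by ring
  -- iterate: exp bound
  have hiter : ∀ n, T ≤ n →
      W n ≤ W T * Real.exp (-(c * ∑ k ∈ Finset.Ico T n, α k)) := by
    intro n hn
    induction n, hn using Nat.le_induction with
    | base => simp
    | succ n hn ih =>
      have hstep := hcontr n hn
      have hexp : 1 - c * α n ≤ Real.exp (-(c * α n)) := by
        have := Real.add_one_le_exp (-(c * α n))
        linarith
      calc W (n + 1) ≤ (1 - c * α n) * W n := hstep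
        _ ≤ Real.exp (-(c * α n)) * W n := mul_le_mul_of_nonneg_right hexp (hWnn n)
        _ ≤ Real.exp (-(c * α n)) * (W T * Real.exp (-(c * ∑ k ∈ Finset.Ico T n, α k))) :=
            mul_le_mul_of_nonneg_left ih (Real.exp_nonneg _)
        _ = W T * Real.exp (-(c * ∑ k ∈ Finset.Ico T (n + 1), α k)) := by
            rw [Finset.sum_Ico_succ_top hn, mul_left_comm, ← Real.exp_add]
            congr 2
            ring
  -- sum lower bound for n ≥ 2T+2
  have hsum : ∀ n : ℕ, 2 * T + 2 ≤ n →
      a / 2 * ((n : ℝ) + 1) ^ (1 - τ1) ≤ ∑ k ∈ Finset.Ico T n, α k := by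
    intro n hn
    have hTn : T ≤ n := by omega
    have hx := hbase n
    have hpow : (0:ℝ) < ((n : ℝ) + 1) ^ τ1 := Real.rpow_pos_of_pos hx _
    have hterm : ∀ k ∈ Finset.Ico T n, a / ((n : ℝ) + 1) ^ τ1 ≤ α k := by
      intro k hk
      have hkn : (k : ℝ) + 1 ≤ (n : ℝ) + 1 := by
        have := (Finset.mem_Ico.mp hk).2
        have : (k : ℝ) ≤ (n : ℝ) := by exact_mod_cast this.le
        linarith
      have hkpow : ((k : ℝ) + 1) ^ τ1 ≤ ((n : ℝ) + 1) ^ τ1 :=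
        Real.rpow_le_rpow (by positivity) hkn (by linarith)
      exact div_le_div_of_nonneg_left ha.le (Real.rpow_pos_of_pos (hbase k) _) hkpow
    have hcard := Finset.card_nsmul_le_sum (Finset.Ico T n) α (a / ((n : ℝ) + 1) ^ τ1) hterm
    rw [Nat.card_Ico, nsmul_eq_mul] at hcard
    have hcast : ((n - T : ℕ) : ℝ) = (n : ℝ) - T := by
      rw [Nat.cast_sub hTn]
    have hhalf : ((n : ℝ) + 1) / 2 ≤ (n : ℝ) - (T : ℝ) := by
      have h2 : ((2 * T + 2 : ℕ) : ℝ) ≤ (n : ℝ) := by exact_mod_cast hn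
      push_cast at h2
      linarith
    have hrw : ((n : ℝ) + 1) ^ (1 - τ1) = ((n : ℝ) + 1) / ((n : ℝ) + 1) ^ τ1 := by
      rw [Real.rpow_sub hx, Real.rpow_one]
    calc a / 2 * ((n : ℝ) + 1) ^ (1 - τ1)
        = (a / 2 * ((n : ℝ) + 1)) / ((n : ℝ) + 1) ^ τ1 := by rw [hrw]; ring
      _ ≤ (((n : ℝ) - T) * a) / ((n : ℝ) + 1) ^ τ1 := by
          refine (div_le_div_iff_of_pos_right hpow).mpr ?_
          nlinarith
      _ = ((n - T : ℕ) : ℝ) * (a / ((n : ℝ) + 1) ^ τ1) := by rw [hcast]; ring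
      _ ≤ ∑ k ∈ Finset.Ico T n, α k := hcard
  -- main tendsto for W
  set δ : ℝ := c * a / 2 with hδ_def
  have hδ : 0 < δ := by positivity
  have hbound : ∀ n : ℕ, 2 * T + 2 ≤ n →
      ((n : ℝ) + 1) ^ τ0 * W n ≤
        W T * (((n : ℝ) + 1) ^ τ0 * Real.exp (-δ * ((n : ℝ) + 1) ^ (1 - τ1))) := by
    intro n hn
    have h1 := hiter n (by omega)
    have h2 := hsum n hn
    have h3 : δ * ((n : ℝ) + 1) ^ (1 - τ1) ≤ c * ∑ k ∈ Finset.Ico T n, α k := by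
      calc δ * ((n : ℝ) + 1) ^ (1 - τ1) = c * (a / 2 * ((n : ℝ) + 1) ^ (1 - τ1)) := by
            rw [hδ_def]; ring
        _ ≤ c * ∑ k ∈ Finset.Ico T n, α k := mul_le_mul_of_nonneg_left h2 hc.le
    have hexp : Real.exp (-(c * ∑ k ∈ Finset.Ico T n, α k)) ≤
        Real.exp (-δ * ((n : ℝ) + 1) ^ (1 - τ1)) := by
      apply Real.exp_le_exp.mpr
      linarith
    have hpnn : (0:ℝ) ≤ ((n : ℝ) + 1) ^ τ0 := (Real.rpow_pos_of_pos (hbase n) _).le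
    calc ((n : ℝ) + 1) ^ τ0 * W n
        ≤ ((n : ℝ) + 1) ^ τ0 * (W T * Real.exp (-(c * ∑ k ∈ Finset.Ico T n, α k))) :=
          mul_le_mul_of_nonneg_left h1 hpnn
      _ ≤ ((n : ℝ) + 1) ^ τ0 * (W T * Real.exp (-δ * ((n : ℝ) + 1) ^ (1 - τ1))) :=
          mul_le_mul_of_nonneg_left (mul_le_mul_of_nonneg_left hexp (hWnn T)) hpnn
      _ = W T * (((n : ℝ) + 1) ^ τ0 * Real.exp (-δ * ((n : ℝ) + 1) ^ (1 - τ1))) := by ring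
  have hWto : Tendsto (fun n : ℕ => ((n : ℝ) + 1) ^ τ0 * W n) atTop (nhds 0) := by
    have hg := (aux_decay_14 τ0 (1 - τ1) δ (by linarith) hδ).const_mul (W T)
    rw [mul_zero] at hg
    refine squeeze_zero' (Eventually.of_forall fun n => by positivity) ?_ hg
    filter_upwards [eventually_ge_atTop (2 * T + 2)] with n hn
    exact hbound n hn
  -- conclude for each component
  constructor
  · apply squeeze_zero_norm (a := fun n : ℕ => ε⁻¹ * (((n : ℝ) + 1) ^ τ0 * W n))
    · intro n
      have hpnn : (0:ℝ) ≤ ((n : ℝ) + 1) ^ τ0 := (Real.rpow_pos_of_pos (hbase n) _).le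
      have hγ : |γ1 n| ≤ ε⁻¹ * W n := by
        rw [inv_mul_eq_div, le_div_iff₀ hε]
        have : 0 ≤ |γ2 n| := abs_nonneg _
        rw [hW_def]
        simp only
        nlinarith
      rw [Real.norm_eq_abs, abs_mul, abs_of_nonneg hpnn]
      calc ((n : ℝ) + 1) ^ τ0 * |γ1 n| ≤ ((n : ℝ) + 1) ^ τ0 * (ε⁻¹ * W n) :=
            mul_le_mul_of_nonneg_left hγ hpnn
        _ = ε⁻¹ * (((n : ℝ) + 1) ^ τ0 * W n) := by ring
    · have := hWto.const_mul ε⁻¹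
      rwa [mul_zero] at this
  · apply squeeze_zero_norm (a := fun n : ℕ => ((n : ℝ) + 1) ^ τ0 * W n)
    · intro n
      have hpnn : (0:ℝ) ≤ ((n : ℝ) + 1) ^ τ0 := (Real.rpow_pos_of_pos (hbase n) _).le
      have hγ : |γ2 n| ≤ W n := by
        rw [hW_def]
        simp only
        nlinarith [abs_nonneg (γ1 n), mul_nonneg hε.le (abs_nonneg (γ1 n))]
      rw [Real.norm_eq_abs, abs_mul, abs_of_nonneg hpnn]
      exact mul_le_mul_of_nonneg_left hγ hpnn
    · exact hWto
end

section
/- Let $(\widetilde{m}_t)_{t \ge T_0}$ be a sequence of nonnegative reals with $\widetilde{m}_t \to 0$, and define $m_{t+1} = \max(m_t, f(t, m_t))$ where $f(t, x) = (1 - c_5 r_2(t) + c_9 r_1(t)) x + c_{10} r_1(t)$ with $r_1(t) = c_1/(t+1)^{\delta_1}$, $r_2(t) = c_2/(t+1)^{\delta_2}$, $c_1, c_2, c_5, c_9, c_{10} > 0$ and $0 < \delta_2 < \delta_1 < 1$, with $m_{T_0} = \widetilde{m}_{T_0} \ge 0$, and suppose $1 - c_5 r_2(t) + c_9 r_1(t)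 \ge 0$ for all $t \ge T_0$. Then $\sup_{t \ge T_0} m_t < \infty$. -/
open Filter

theorem stmt_16 (c1 c2 c5 c9 c10 δ1 δ2 : ℝ)
    (hc1 : 0 < c1) (hc2 : 0 < c2) (hc5 : 0 < c5) (hc9 : 0 < c9) (hc10 : 0 < c10)
    (hδ2 : 0 < δ2) (hδ21 : δ2 < δ1) (hδ1 : δ1 < 1)
    (T0 : ℕ) (mt m : ℕ → ℝ)
    (hmtnn : ∀ t : ℕ, T0 ≤ t → 0 ≤ mt t)
    (hmt0 : Tendsto mt atTop (nhds 0))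
    (hinit : m T0 = mt T0)
    (hcoef : ∀ t : ℕ, T0 ≤ t →
      0 ≤ 1 - c5 * (c2 / ((t : ℝ) + 1) ^ δ2) + c9 * (c1 / ((t : ℝ) + 1) ^ δ1))
    (hrec : ∀ t : ℕ, T0 ≤ t → m (t + 1) =
      max (m t)
        ((1 - c5 * (c2 / ((t : ℝ) + 1) ^ δ2) + c9 * (c1 / ((t : ℝ) + 1) ^ δ1)) * m t
          + c10 * (c1 / ((t : ℝ) + 1) ^ δ1))) :
    ∃ B : ℝ, ∀ t : ℕ, T0 ≤ t → m t ≤ B := by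
  have hb : ∀ t : ℕ, (0:ℝ) < (t:ℝ) + 1 := fun t => by positivity
  -- find T1 with (c9+c10)*r1 ≤ c5*r2 for t ≥ T1
  have htend : Tendsto (fun t : ℕ => ((t:ℝ)+1) ^ (δ1 - δ2)) atTop atTop := by
    apply (tendsto_rpow_atTop (by linarith)).comp
    exact tendsto_atTop_add_const_right _ 1 tendsto_natCast_atTop_atTop
  obtain ⟨T1', hT1'⟩ := eventually_atTop.mp
    (htend.eventually_ge_atTop ((c9 + c10) * c1 / (c5 * c2)))
  set T1 : ℕ := max T0 T1' with hT1def
  have hT0T1 : T0 ≤ T1 := le_max_left _ _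
  have key : ∀ t : ℕ, T1 ≤ t →
      (c9 + c10) * (c1 / ((t : ℝ) + 1) ^ δ1) ≤ c5 * (c2 / ((t : ℝ) + 1) ^ δ2) := by
    intro t ht
    have hK := hT1' t (le_trans (le_max_right _ _) ht)
    have h1 : (0:ℝ) < ((t:ℝ)+1) ^ δ1 := Real.rpow_pos_of_pos (hb t) δ1
    have h2 : (0:ℝ) < ((t:ℝ)+1) ^ δ2 := Real.rpow_pos_of_pos (hb t) δ2
    have hsub : ((t:ℝ)+1) ^ (δ1 - δ2) = ((t:ℝ)+1) ^ δ1 / ((t:ℝ)+1) ^ δ2 :=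
      Real.rpow_sub (hb t) δ1 δ2
    rw [hsub, div_le_div_iff₀ (by positivity) h2] at hK
    rw [← mul_div_assoc, ← mul_div_assoc, div_le_div_iff₀ h1 h2]
    have hc52 : (0:ℝ) < c5 * c2 := by positivity
    nlinarith [hK]
  -- m is nondecreasing on [T0, ∞)
  have hmono : ∀ s t : ℕ, T0 ≤ s → s ≤ t → m s ≤ m t := by
    intro s t hs hst
    induction t, hst using Nat.le_induction with
    | base => exact le_refl _
    | succ n hn ih =>
      calc m s ≤ m n := ih
        _ ≤ m (n + 1) := by rw [hrec n (hs.trans hn)]; exact le_max_left _ _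
  set B : ℝ := max 1 (m T1) with hBdef
  have hB1 : (1:ℝ) ≤ B := le_max_left _ _
  have hBT1 : m T1 ≤ B := le_max_right _ _
  have hstep : ∀ t : ℕ, T1 ≤ t → m t ≤ B := by
    intro t ht
    induction t, ht using Nat.le_induction with
    | base => exact hBT1
    | succ n hn ih =>
      have hT0n : T0 ≤ n := hT0T1.trans hn
      rw [hrec n hT0n]
      apply max_le ih
      have ha : 0 ≤ 1 - c5 * (c2 / ((n : ℝ) + 1) ^ δ2) + c9 * (c1 / ((n : ℝ) + 1) ^ δ1) :=
        hcoef n hT0n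
      have hmn : m n ≤ B := ih
      have h1 : (1 - c5 * (c2 / ((n : ℝ) + 1) ^ δ2) + c9 * (c1 / ((n : ℝ) + 1) ^ δ1)) * m n
          ≤ (1 - c5 * (c2 / ((n : ℝ) + 1) ^ δ2) + c9 * (c1 / ((n : ℝ) + 1) ^ δ1)) * B :=
        mul_le_mul_of_nonneg_left hmn ha
      have hkey := key n hn
      have hr1pos : (0:ℝ) < c1 / ((n : ℝ) + 1) ^ δ1 := by positivity
      have hB0 : (0:ℝ) ≤ B := by linarith
      nlinarith [mul_nonneg (sub_nonneg.mpr hkey) hB0,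
        mul_nonneg hr1pos.le (sub_nonneg.mpr hB1)]
  refine ⟨B, fun t ht => ?_⟩
  rcases le_total t T1 with h | h
  · exact (hmono t T1 ht h).trans hBT1
  · exact hstep t h
end

section
/- Consider the scalar recursion $v_{t+1} = (1 - c_3 r_1(t)) v_t + \rho(t)$ where $r_1(t) = c_1/(t+1)^{\delta_1}$, $c_1, c_3 > 0$, $0 < \delta_1 < 1$, and $|\rho(t)| \le C/(t+1)^{\delta_1 + \delta_0}$ for some constants $C, \delta_0 > 0$. Then $\lim_{t\to\infty}(t+1)^{\delta_0'} v_t = 0$ for all $0 \le \delta_0' < \delta_0$ and all initial conditions $v_0 \in \mathbb{R}$. -/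
open Filter

lemma aux_bern_s18 (u β : ℝ) (hu : 0 ≤ u) (hβ : 0 ≤ β) :
    1 - β * u ≤ (1 + u) ^ (-β) := by
  have h0 : (0:ℝ) < 1 + u := by linarith
  have h1 : (1 + u) ^ β ≤ Real.exp (β * u) := by
    calc (1 + u) ^ β ≤ (Real.exp u) ^ β :=
          Real.rpow_le_rpow (by linarith) (by linarith [Real.add_one_le_exp u]) hβ
      _ = Real.exp (β * u) := by
          rw [Real.rpow_def_of_pos (Real.exp_pos u), Real.log_exp, mul_comm]
  have h2 : 1 - β * u ≤ Real.exp (-(β * u)) := by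
    linarith [Real.add_one_le_exp (-(β * u))]
  have h3 : (1 + u) ^ (-β) = ((1 + u) ^ β)⁻¹ := Real.rpow_neg (by linarith) β
  have hp : (0:ℝ) < (1 + u) ^ β := Real.rpow_pos_of_pos h0 β
  have h4 : Real.exp (-(β * u)) ≤ ((1 + u) ^ β)⁻¹ := by
    rw [Real.exp_neg]
    exact inv_anti₀ hp h1
  linarith [h3 ▸ h4]

lemma aux_key (x β : ℝ) (hx : 1 ≤ x) (hβ : 0 ≤ β) :
    (1 - β / x) / x ^ β ≤ 1 / (x + 1) ^ β := by
  have hx0 : (0:ℝ) < x := by linarith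
  have hxne : x ≠ 0 := ne_of_gt hx0
  have hsplit : x + 1 = x * (1 + 1/x) := by field_simp
  have hb := aux_bern_s18 (1/x) β (by positivity) hβ
  have hmul : (x + 1) ^ (-β) = x ^ (-β) * (1 + 1/x) ^ (-β) := by
    rw [hsplit, Real.mul_rpow (le_of_lt hx0) (by positivity)]
  have hxb : (0:ℝ) < x ^ β := Real.rpow_pos_of_pos hx0 β
  have hninv : x ^ (-β) = (x ^ β)⁻¹ := Real.rpow_neg (le_of_lt hx0) β
  have h1 : (1 - β / x) / x ^ β ≤ (x + 1) ^ (-β) := by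
    rw [hmul, hninv]
    have : β / x = β * (1/x) := by ring
    rw [this, div_eq_mul_inv, mul_comm]
    exact mul_le_mul_of_nonneg_left hb (by positivity)
  have h2 : (x + 1) ^ (-β) = 1 / (x + 1) ^ β := by
    rw [Real.rpow_neg (by linarith), one_div]
  linarith [h2 ▸ h1]

theorem stmt_18 (c1 c3 C δ1 δ0 : ℝ)
    (hc1 : 0 < c1) (hc3 : 0 < c3) (hC : 0 < C)
    (hδ1 : 0 < δ1) (hδ1' : δ1 < 1) (hδ0 : 0 < δ0)
    (v ρ : ℕ → ℝ)
    (hρ : ∀ t : ℕ, |ρ t| ≤ C / ((t : ℝ) + 1) ^ (δ1 + δ0))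
    (hrec : ∀ t : ℕ, v (t + 1) = (1 - c3 * (c1 / ((t : ℝ) + 1) ^ δ1)) * v t + ρ t)
    (δ0' : ℝ) (hδ0' : 0 ≤ δ0') (hδ0'' : δ0' < δ0) :
    Tendsto (fun t : ℕ => ((t : ℝ) + 1) ^ δ0' * v t) atTop (nhds 0) := by
  set β : ℝ := (δ0' + δ0) / 2 with hβdef
  have hβ0 : 0 < β := by
    simp only [hβdef]; linarith
  have hβδ0 : β < δ0 := by simp only [hβdef]; linarith
  have hβ' : δ0' < β := by simp only [hβdef]; linarith
  -- natural cast tendsto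
  have hnat : Tendsto (fun t : ℕ => (t : ℝ) + 1) atTop atTop :=
    tendsto_atTop_add_const_right atTop 1 tendsto_natCast_atTop_atTop
  -- eventually conditions
  have hev1 : ∀ᶠ t : ℕ in atTop, c3 * c1 ≤ ((t : ℝ) + 1) ^ δ1 :=
    ((tendsto_rpow_atTop hδ1).comp hnat).eventually_ge_atTop (c3 * c1)
  have hev2 : ∀ᶠ t : ℕ in atTop, 2 * β ≤ c3 * c1 * ((t : ℝ) + 1) ^ (1 - δ1) := by
    have h := ((tendsto_rpow_atTop (by linarith : (0:ℝ) < 1 - δ1)).comp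
      hnat).eventually_ge_atTop (2 * β / (c3 * c1))
    filter_upwards [h] with t ht
    have hcc : 0 < c3 * c1 := mul_pos hc3 hc1
    simp only [Function.comp_apply] at ht
    rw [div_le_iff₀ hcc] at ht
    calc 2 * β ≤ ((t : ℝ) + 1) ^ (1 - δ1) * (c3 * c1) := ht
      _ = c3 * c1 * ((t : ℝ) + 1) ^ (1 - δ1) := mul_comm _ _
  obtain ⟨T0, hT0⟩ := eventually_atTop.mp (hev1.and hev2)
  set K : ℝ := max (2 * C / (c3 * c1)) (|v T0| * ((T0 : ℝ) + 1) ^ β) with hKdef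
  have hcc : 0 < c3 * c1 := mul_pos hc3 hc1
  have hK0 : 0 ≤ K := le_trans (by positivity) (le_max_left _ _)
  have hKC : 2 * C ≤ K * (c3 * c1) := by
    have h1 : 2 * C / (c3 * c1) ≤ K := le_max_left _ _
    calc 2 * C = 2 * C / (c3 * c1) * (c3 * c1) := by field_simp
      _ ≤ K * (c3 * c1) := mul_le_mul_of_nonneg_right h1 hcc.le
  -- the main induction
  have hbound : ∀ t : ℕ, T0 ≤ t → |v t| ≤ K / ((t : ℝ) + 1) ^ β := by
    intro t ht
    induction t, ht using Nat.le_induction with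
    | base =>
        have hp : (0:ℝ) < ((T0 : ℝ) + 1) ^ β := by positivity
        rw [le_div_iff₀ hp]
        exact le_max_right _ _
    | succ t ht ih =>
        set x : ℝ := (t : ℝ) + 1 with hxdef
        have hx1 : (1:ℝ) ≤ x := by
          have h : (0:ℝ) ≤ (t : ℝ) := Nat.cast_nonneg t
          simp only [hxdef]; linarith
        have hx0 : (0:ℝ) < x := by linarith
        obtain ⟨hc1t, hc2t⟩ := hT0 t ht
        have hQ : (0:ℝ) < x ^ δ1 := Real.rpow_pos_of_pos hx0 δ1
        have hP : (0:ℝ) < x ^ β := Real.rpow_pos_of_pos hx0 β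
        have hR : (0:ℝ) < x ^ (1 - δ1) := Real.rpow_pos_of_pos hx0 (1 - δ1)
        have hQR : x ^ δ1 * x ^ (1 - δ1) = x := by
          rw [← Real.rpow_add hx0]; simp
        have ha0 : 0 ≤ c3 * (c1 / x ^ δ1) := by positivity
        have ha1 : c3 * (c1 / x ^ δ1) ≤ 1 := by
          rw [mul_div_assoc', div_le_one hQ]; exact hc1t
        have hcast : ((t + 1 : ℕ) : ℝ) + 1 = x + 1 := by push_cast; ring
        rw [hcast]
        have hρ' : |ρ t| ≤ C / (x ^ δ1 * x ^ β) := by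
          refine le_trans (hρ t) ?_
          rw [← Real.rpow_add hx0]
          apply div_le_div_of_nonneg_left hC.le (by positivity)
          exact Real.rpow_le_rpow_of_exponent_le hx1 (by linarith)
        have key1 := aux_key x β hx1 hβ0.le
        have hmain : (1 - c3 * (c1 / x ^ δ1)) * (K / x ^ β) + C / (x ^ δ1 * x ^ β)
            ≤ K * ((1 - β / x) / x ^ β) := by
          have h2 : K * x ^ δ1 * (2 * β) ≤ K * x ^ δ1 * (c3 * c1 * x ^ (1 - δ1)) :=
            mul_le_mul_of_nonneg_left hc2t (by positivity)
          have h3 : K * (c3 * c1) * (x ^ δ1 * x ^ (1 - δ1)) = K * (c3 * c1) * x := by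
            rw [hQR]
          have h4 : 2 * C * x ≤ K * (c3 * c1) * x := mul_le_mul_of_nonneg_right hKC hx0.le
          have h1 : C * x + K * β * x ^ δ1 ≤ K * (c3 * c1) * x := by nlinarith [h2, h3, h4]
          rw [← sub_nonneg]
          have expand : K * ((1 - β / x) / x ^ β) -
              ((1 - c3 * (c1 / x ^ δ1)) * (K / x ^ β) + C / (x ^ δ1 * x ^ β))
              = (K * (c3 * c1) * x - (C * x + K * β * x ^ δ1)) / (x ^ δ1 * x ^ β * x) := by
            field_simp
            ring
          rw [expand]
          exact div_nonneg (by linarith) (by positivity)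
        calc |v (t + 1)| = |(1 - c3 * (c1 / x ^ δ1)) * v t + ρ t| := by rw [hrec t]
          _ ≤ |(1 - c3 * (c1 / x ^ δ1)) * v t| + |ρ t| := abs_add_le _ _
          _ = (1 - c3 * (c1 / x ^ δ1)) * |v t| + |ρ t| := by
              rw [abs_mul, abs_of_nonneg (by linarith)]
          _ ≤ (1 - c3 * (c1 / x ^ δ1)) * (K / x ^ β) + C / (x ^ δ1 * x ^ β) :=
              add_le_add (mul_le_mul_of_nonneg_left ih (by linarith)) hρ'
          _ ≤ K * ((1 - β / x) / x ^ β) := hmain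
          _ ≤ K * (1 / (x + 1) ^ β) := mul_le_mul_of_nonneg_left key1 hK0
          _ = K / (x + 1) ^ β := by ring
  -- conclude by squeeze
  have hg : Tendsto (fun t : ℕ => K / ((t : ℝ) + 1) ^ (β - δ0')) atTop (nhds 0) := by
    have h0 : Tendsto (fun t : ℕ => ((t : ℝ) + 1) ^ (-(β - δ0'))) atTop (nhds 0) :=
      (tendsto_rpow_neg_atTop (by linarith : (0:ℝ) < β - δ0')).comp hnat
    have := h0.const_mul K
    rw [mul_zero] at this
    refine this.congr fun t => ?_
    rw [Real.rpow_neg (by positivity), div_eq_mul_inv]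
  rw [tendsto_zero_iff_norm_tendsto_zero]
  refine squeeze_zero' (Eventually.of_forall fun t => norm_nonneg _)
    (eventually_atTop.mpr ⟨T0, fun t ht => ?_⟩) hg
  have hx0 : (0:ℝ) < (t : ℝ) + 1 := by positivity
  have hd : (0:ℝ) < ((t : ℝ) + 1) ^ δ0' := Real.rpow_pos_of_pos hx0 δ0'
  rw [Real.norm_eq_abs, abs_mul, abs_of_nonneg hd.le]
  have hsub : ((t : ℝ) + 1) ^ (β - δ0') = ((t : ℝ) + 1) ^ β / ((t : ℝ) + 1) ^ δ0' :=
    Real.rpow_sub hx0 _ _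
  calc ((t : ℝ) + 1) ^ δ0' * |v t| ≤ ((t : ℝ) + 1) ^ δ0' * (K / ((t : ℝ) + 1) ^ β) :=
        mul_le_mul_of_nonneg_left (hbound t ht) hd.le
    _ = K / (((t : ℝ) + 1) ^ β / ((t : ℝ) + 1) ^ δ0') := by
        field_simp
    _ = K / ((t : ℝ) + 1) ^ (β - δ0') := by rw [hsub]
end
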